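/- arXiv:1505.05001 — 7 statements merged into one kernel-verified Lean document; each statement's English description precedes it below -/
import Mathlib

section
/- Let C be a class of groups closed under taking subgroups and under taking finite direct products, and assume that every free-by-C group is residually C. Let B ≤ A and C₀ be groups such that A and C₀ are residually C and B is C-closed in A. Then the special amalgam G = A ⋆_B C₀ is residually C. -/
universe u

open Monoid

/-- A group `G` is *residually `C`*: every nontrivial element survives in a
surjective homomorphic image lying in the class `C`. -/
def ResiduallyC (C : ∀ (G : Type u) [Group G], Prop) (G : Type u) [Group G] : Prop :=
  ∀ g : G, g ≠ 1 → ∃ (Q : Type u) (_ : Group Q) (φ : G →* Q),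
    C Q ∧ Function.Surjective φ ∧ φ g ≠ 1
/-- The special amalgam `A ⋆_B C₀ = A ∗_B (B × C₀)`: the pushout of the
inclusion `B → A` and the homomorphism `B → B × C₀`, `b ↦ (b, 1)`, realised
as the quotient of the coproduct `A ∗ (B × C₀)` by the normal closure of the
elements identifying the two copies of `B`. -/
def SpecialAmalgam (A : Type u) [Group A] (B : Subgroup A) (C₀ : Type u) [Group C₀] :
    Type u :=
  (Monoid.Coprod A (B × C₀)) ⧸ Subgroup.normalClosure
    { x : Monoid.Coprod A (B × C₀) |
        ∃ b : B, x = Coprod.inl (b : A) * (Coprod.inr ((b, 1) : B × C₀))⁻¹ }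

instance (A : Type u) [Group A] (B : Subgroup A) (C₀ : Type u) [Group C₀] :
    Group (SpecialAmalgam A B C₀) :=
  QuotientGroup.Quotient.group _

/-- The canonical homomorphism `A → A ⋆_B C₀`. -/
def SpecialAmalgam.ofA (A : Type u) [Group A] (B : Subgroup A) (C₀ : Type u) [Group C₀] :
    A →* SpecialAmalgam A B C₀ :=
  (QuotientGroup.mk' _).comp Coprod.inl

/-- The canonical homomorphism `C₀ → A ⋆_B C₀`. -/
def SpecialAmalgam.ofC (A : Type u) [Group A] (B : Subgroup A) (C₀ : Type u) [Group C₀] :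
    C₀ →* SpecialAmalgam A B C₀ :=
  (QuotientGroup.mk' _).comp ((Coprod.inr).comp (MonoidHom.inr B C₀))
/-- A subset `X ⊆ G` is *`C`-closed* in `G`: every `g ∉ X` can be separated
from `X` in a surjective homomorphic image lying in `C`. -/
def CClosed (C : ∀ (G : Type u) [Group G], Prop) {G : Type u} [Group G] (X : Set G) : Prop :=
  ∀ g ∉ X, ∃ (Q : Type u) (_ : Group Q) (φ : G →* Q),
    C Q ∧ Function.Surjective φ ∧ φ g ∉ φ '' X

namespace SpecialAmalgamAux

variable {A C₀ : Type u} [Group A] [Group C₀] (B : Subgroup A)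

variable (C₀) in
def NC : Subgroup (Coprod A (B × C₀)) := Subgroup.normalClosure
    { x : Monoid.Coprod A (B × C₀) |
        ∃ b : B, x = Coprod.inl (b : A) * (Coprod.inr ((b, 1) : B × C₀))⁻¹ }

instance NC_normal : (NC C₀ B).Normal := Subgroup.normalClosure_normal

variable (C₀) in
def mkG : Coprod A (B × C₀) →* SpecialAmalgam A B C₀ := QuotientGroup.mk' (NC C₀ B)

lemma mkG_apply (x : Coprod A (B × C₀)) :
    mkG C₀ B x = (QuotientGroup.mk x : (Coprod A (B × C₀)) ⧸ NC C₀ B) := rfl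

variable (C₀) in
def iA : A →* SpecialAmalgam A B C₀ := (mkG C₀ B).comp Coprod.inl

def iBC : (B × C₀) →* SpecialAmalgam A B C₀ := (mkG C₀ B).comp Coprod.inr

lemma iA_eq_ofA : iA C₀ B = SpecialAmalgam.ofA A B C₀ := rfl

lemma iA_b (b : B) : iA C₀ B (b : A) = iBC B (b, 1) := by
  have hmem : Coprod.inl (b : A) * (Coprod.inr ((b, 1) : B × C₀))⁻¹ ∈ NC C₀ B :=
    Subgroup.subset_normalClosure ⟨b, rfl⟩
  have h1 : mkG C₀ B (Coprod.inl (b : A) * (Coprod.inr ((b, 1) : B × C₀))⁻¹) = 1 := by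
    rw [mkG_apply]; exact (QuotientGroup.eq_one_iff _).mpr hmem
  rw [map_mul, map_inv] at h1
  exact (mul_inv_eq_one.mp h1)

def piH : SpecialAmalgam A B C₀ →* A × C₀ :=
  QuotientGroup.lift (NC C₀ B)
    (Coprod.lift (MonoidHom.inl A C₀) ((B.subtype).prodMap (MonoidHom.id C₀)))
    (Subgroup.normalClosure_le_normal (by
      rintro x ⟨b, rfl⟩
      simp [MonoidHom.mem_ker]))

@[simp] lemma piH_iA (a : A) : piH B (iA C₀ B a) = (a, 1) := by
  refine (QuotientGroup.lift_mk' (NC C₀ B) _ (Coprod.inl a)).trans ?_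
  simp

@[simp] lemma piH_iBC (x : B × C₀) : piH B (iBC B x) = ((x.1 : A), x.2) := by
  refine (QuotientGroup.lift_mk' (NC C₀ B) _ (Coprod.inr x)).trans ?_
  simp [Prod.map, Prod.ext_iff]

def prodL (L : List ((B × C₀) × A)) : SpecialAmalgam A B C₀ :=
  (L.map fun p => iBC B p.1 * iA C₀ B p.2).prod

@[simp] lemma prodL_nil : prodL B ([] : List ((B × C₀) × A)) = 1 := rfl

lemma prodL_cons (p : (B × C₀) × A) (L : List ((B × C₀) × A)) :
    prodL B (p :: L) = iBC B p.1 * iA C₀ B p.2 * prodL B L := by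
  simp [prodL]

def IsAlt (g : SpecialAmalgam A B C₀) : Prop :=
  (∃ a, g = iA C₀ B a) ∨ (∃ x, g = iBC B x) ∨
  ∃ (a₀ : A) (L : List ((B × C₀) × A)), L ≠ [] ∧ (∀ p ∈ L, p.1.2 ≠ (1 : C₀)) ∧
    (∀ p ∈ L.dropLast, p.2 ∉ B) ∧ g = iA C₀ B a₀ * prodL B L


lemma isAlt_one : IsAlt B (1 : SpecialAmalgam A B C₀) :=
  Or.inl ⟨1, by simp⟩

lemma isAlt_mulA (a : A) (t : SpecialAmalgam A B C₀) (h : IsAlt B t) :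
    IsAlt B (iA C₀ B a * t) := by
  rcases h with ⟨a', rfl⟩ | ⟨x, rfl⟩ | ⟨a₀, L, hL, hc, hint, rfl⟩
  · exact Or.inl ⟨a * a', by rw [map_mul]⟩
  · by_cases hc : x.2 = 1
    · refine Or.inl ⟨a * (x.1 : A), ?_⟩
      rw [map_mul, iA_b]
      congr 1
      rw [show x = (x.1, x.2) from rfl, hc]
    · refine Or.inr (Or.inr ⟨a, [(x, 1)], by simp, by simpa using hc, by simp, ?_⟩)
      simp [prodL]
  · exact Or.inr (Or.inr ⟨a * a₀, L, hL, hc, hint, by rw [map_mul, mul_assoc]⟩)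

lemma isAlt_mulBC (x : B × C₀) (t : SpecialAmalgam A B C₀) (h : IsAlt B t) :
    IsAlt B (iBC B x * t) := by
  by_cases hx : x.2 = 1
  · -- `x` is really an `A`-letter
    have hx1 : iBC B x = iA C₀ B (x.1 : A) := by
      rw [iA_b]; congr 1; rw [show x = (x.1, x.2) from rfl, hx]
    rw [hx1]
    exact isAlt_mulA B _ _ h
  rcases h with ⟨a', rfl⟩ | ⟨y, rfl⟩ | ⟨a₀, L, hL, hc, hint, rfl⟩
  · refine Or.inr (Or.inr ⟨1, [(x, a')], by simp, by simpa using hx, by simp, ?_⟩)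
    simp [prodL]
  · exact Or.inr (Or.inl ⟨x * y, by rw [map_mul]⟩)
  · by_cases ha₀ : a₀ ∈ B
    · -- absorb `a₀` into the `B × C₀` letters
      obtain ⟨z, L', rfl⟩ := List.exists_cons_of_ne_nil hL
      have key : iBC B x * (iA C₀ B a₀ * prodL B (z :: L')) =
          iBC B (x * (⟨a₀, ha₀⟩, 1) * z.1) * iA C₀ B z.2 * prodL B L' := by
        rw [prodL_cons, map_mul, map_mul, ← iA_b]
        simp [mul_assoc]
      set x' : B × C₀ := x * (⟨a₀, ha₀⟩, 1) * z.1 with hx'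
      have hx'2 : x'.2 = x.2 * z.1.2 := by simp [hx']
      by_cases hcc : x'.2 = 1
      · -- letters collapse
        have hxx : iBC B x' = iA C₀ B (x'.1 : A) := by
          rw [iA_b]; congr 1; rw [show x' = (x'.1, x'.2) from rfl, hcc]
        rw [key, hxx, ← map_mul]
        rcases eq_or_ne L' [] with rfl | hL'
        · exact Or.inl ⟨(x'.1 : A) * z.2, by simp⟩
        · refine Or.inr (Or.inr ⟨(x'.1 : A) * z.2, L', hL', ?_, ?_, rfl⟩)
          · exact fun p hp => hc p (List.mem_cons_of_mem _ hp)
          · intro p hp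
            refine hint p ?_
            rw [List.dropLast_cons_of_ne_nil hL']
            exact List.mem_cons_of_mem _ hp
      · refine Or.inr (Or.inr ⟨1, (x', z.2) :: L', by simp, ?_, ?_, ?_⟩)
        · intro p hp
          rcases List.mem_cons.mp hp with rfl | hp
          · exact hcc
          · exact hc p (List.mem_cons_of_mem _ hp)
        · intro p hp
          rcases eq_or_ne L' [] with rfl | hL'
          · simp at hp
          · rw [List.dropLast_cons_of_ne_nil hL'] at hp
            rcases List.mem_cons.mp hp with rfl | hp2
            · refine hint z ?_
              rw [List.dropLast_cons_of_ne_nil hL']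
              exact List.mem_cons_self
            · refine hint p ?_
              rw [List.dropLast_cons_of_ne_nil hL']
              exact List.mem_cons_of_mem _ hp2
        · rw [key, prodL_cons]
          simp [mul_assoc]
    · refine Or.inr (Or.inr ⟨1, (x, a₀) :: L, by simp, ?_, ?_, ?_⟩)
      · intro p hp
        rcases List.mem_cons.mp hp with rfl | hp
        · exact hx
        · exact hc p hp
      · intro p hp
        rw [List.dropLast_cons_of_ne_nil hL] at hp
        rcases List.mem_cons.mp hp with rfl | hp
        · exact ha₀
        · exact hint p hp
      · rw [prodL_cons]
        simp [mul_assoc]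


lemma isAlt_all (g : SpecialAmalgam A B C₀) : IsAlt B g := by
  have key : ∀ (w : Coprod A (B × C₀)) (t : SpecialAmalgam A B C₀),
      IsAlt B t → IsAlt B (mkG C₀ B w * t) := by
    intro w
    induction w using Coprod.induction_on with
    | inl a => exact fun t ht => isAlt_mulA B a t ht
    | inr x => exact fun t ht => isAlt_mulBC B x t ht
    | mul x y ihx ihy =>
      intro t ht
      rw [map_mul, mul_assoc]
      exact ihx _ (ihy t ht)
  obtain ⟨w, rfl⟩ := QuotientGroup.mk'_surjective (NC C₀ B) g
  have := key w 1 (isAlt_one B)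
  rwa [mul_one] at this


section Target

lemma reduce_eq_self {α : Type*} [DecidableEq α] :
    ∀ l : List (α × Bool), l.Chain' (fun a b => ¬(a.1 = b.1 ∧ a.2 = !b.2)) →
      FreeGroup.reduce l = l
  | [] => fun _ => rfl
  | [a] => fun _ => rfl
  | a :: b :: t => fun h => by
    have h1 : ¬(a.1 = b.1 ∧ a.2 = !b.2) := (List.isChain_cons_cons.mp h).1
    have h2 := reduce_eq_self (b :: t) (List.isChain_cons_cons.mp h).2
    rw [FreeGroup.reduce.cons, h2]
    show (if a.1 = b.1 ∧ a.2 = !b.2 then t else a :: b :: t) = a :: b :: t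
    rw [if_neg h1]

lemma mk_ne_one {α : Type*} [DecidableEq α] {l : List (α × Bool)}
    (h : FreeGroup.reduce l = l) (hl : l ≠ []) : FreeGroup.mk l ≠ 1 := by
  intro e
  have h2 : FreeGroup.reduce l = [] := by
    rw [← FreeGroup.toWord_mk, e, FreeGroup.toWord_one]
  rw [h] at h2
  exact hl h2

def permHom (α : Type u) : Equiv.Perm α →* MulAut (FreeGroup α) where
  toFun e := FreeGroup.freeGroupCongr e
  map_one' := FreeGroup.freeGroupCongr_refl
  map_mul' e f := (FreeGroup.freeGroupCongr_trans f e).symm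

lemma permHom_of {α : Type u} (e : Equiv.Perm α) (s : α) :
    permHom α e (FreeGroup.of s) = FreeGroup.of (e s) := by
  simp [permHom]

variable {Q R : Type u} [Group Q] [Group R] (φ : A →* Q) (ψ : C₀ →* R)

def sPerm : (Q × R) →* Equiv.Perm ((Q ⧸ B.map φ) × R) where
  toFun p := (MulAction.toPerm p.1).prodCongr (Equiv.mulLeft p.2)
  map_one' := by
    ext s
    · simp
    · simp
  map_mul' p q := by
    ext s
    · simp [mul_smul]
    · simp [mul_assoc]

def fAut : (Q × R) →* MulAut (FreeGroup ((Q ⧸ B.map φ) × R)) :=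
  (permHom _).comp (sPerm B φ)

lemma fAut_of (p : Q × R) (s : (Q ⧸ B.map φ) × R) :
    fAut B φ p (FreeGroup.of s) = FreeGroup.of (p.1 • s.1, p.2 * s.2) := by
  simp [fAut, permHom_of, sPerm, Prod.map]

def e0 : Q ⧸ B.map φ := ((1 : Q) : Q ⧸ B.map φ)

lemma smul_e0 (b : B) : (φ (b : A)) • e0 B φ = e0 B φ := by
  show _ = ((1 : Q) : Q ⧸ B.map φ)
  rw [e0, MulAction.Quotient.smul_mk]
  rw [QuotientGroup.eq]
  refine ⟨b⁻¹, B.inv_mem b.2, by simp⟩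

def uR (r : R) : FreeGroup ((Q ⧸ B.map φ) × R) :=
  FreeGroup.of (e0 B φ, (1 : R)) * (FreeGroup.of (e0 B φ, r))⁻¹

lemma uR_one : uR B φ (1 : R) = 1 := mul_inv_cancel _ -- check name

def ΛBC : (B × C₀) →* FreeGroup ((Q ⧸ B.map φ) × R) ⋊[fAut B φ] (Q × R) :=
  MonoidHom.mk' (fun x => ⟨uR B φ (ψ x.2), (φ (x.1 : A), ψ x.2)⟩) (by
    intro x y
    have h1 : fAut B φ (φ (x.1 : A), ψ x.2) (uR B φ (ψ y.2)) =
        FreeGroup.of (e0 B φ, ψ x.2) * (FreeGroup.of (e0 B φ, ψ x.2 * ψ y.2))⁻¹ := by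
      rw [uR, map_mul, map_inv, fAut_of, fAut_of, smul_e0, mul_one]
    refine SemidirectProduct.ext ?_ ?_
    · show uR B φ (ψ (x * y).2) =
        uR B φ (ψ x.2) * fAut B φ (φ (x.1 : A), ψ x.2) (uR B φ (ψ y.2))
      rw [h1]
      show uR B φ (ψ (x.2 * y.2)) = _
      rw [map_mul ψ]
      simp only [uR]
      group
    · show ((φ ((x * y).1 : A), ψ (x * y).2) : Q × R) = (φ (x.1 : A), ψ x.2) * (φ (y.1 : A), ψ y.2)
      show ((φ ((x.1 * y.1 : B) : A), ψ (x.2 * y.2)) : Q × R) = _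
      simp [Prod.ext_iff])

def ΛA : A →* FreeGroup ((Q ⧸ B.map φ) × R) ⋊[fAut B φ] (Q × R) :=
  SemidirectProduct.inr.comp (φ.prod (1 : A →* R))

def Λ0 : Coprod A (B × C₀) →* FreeGroup ((Q ⧸ B.map φ) × R) ⋊[fAut B φ] (Q × R) :=
  Coprod.lift (ΛA B φ) (ΛBC B φ ψ)

def Lam : SpecialAmalgam A B C₀ →* FreeGroup ((Q ⧸ B.map φ) × R) ⋊[fAut B φ] (Q × R) :=
  QuotientGroup.lift (NC C₀ B) (Λ0 B φ ψ)
    (Subgroup.normalClosure_le_normal (by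
      rintro x ⟨b, rfl⟩
      have : Λ0 B φ ψ (Coprod.inl (b : A) * (Coprod.inr ((b, 1) : B × C₀))⁻¹) = 1 := by
        rw [map_mul, map_inv, Λ0, Coprod.lift_apply_inl, Coprod.lift_apply_inr]
        have hb : ΛBC B φ ψ ((b, 1) : B × C₀) = ΛA B φ (b : A) := by
          refine SemidirectProduct.ext ?_ ?_
          · show uR B φ (ψ 1) = 1
            rw [map_one, uR_one]
          · show ((φ (b : A), ψ (1 : C₀)) : Q × R) = ((φ (b : A), (1:R)) : Q × R)
            simp
        rw [hb, mul_inv_cancel]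
      exact MonoidHom.mem_ker.mpr this))

lemma Lam_iA (a : A) : Lam B φ ψ (iA C₀ B a) = ΛA B φ a :=
  (QuotientGroup.lift_mk' (NC C₀ B) _ (Coprod.inl a)).trans (Coprod.lift_apply_inl _ _ a)

lemma Lam_iBC (x : B × C₀) : Lam B φ ψ (iBC B x) = ΛBC B φ ψ x :=
  (QuotientGroup.lift_mk' (NC C₀ B) _ (Coprod.inr x)).trans (Coprod.lift_apply_inr _ _ x)


@[simp] lemma LBC_apply (x : B × C₀) :
    ΛBC B φ ψ x = ⟨uR B φ (ψ x.2), (φ (x.1 : A), ψ x.2)⟩ := rfl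

@[simp] lemma LA_apply (a : A) :
    ΛA B φ a = (⟨1, (φ a, 1)⟩ : FreeGroup ((Q ⧸ B.map φ) × R) ⋊[fAut B φ] (Q × R)) := rfl

lemma of_mul_inv_mul_mk {α : Type u} (s₁ s₂ : α) (l : List (α × Bool)) :
    FreeGroup.of s₁ * (FreeGroup.of s₂)⁻¹ * FreeGroup.mk l =
      FreeGroup.mk ((s₁, true) :: (s₂, false) :: l) := by
  have h2 : (FreeGroup.of s₂)⁻¹ = FreeGroup.mk [(s₂, false)] := by
    rw [show FreeGroup.of s₂ = FreeGroup.mk [(s₂, true)] from rfl, FreeGroup.inv_mk]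
    rfl
  rw [show FreeGroup.of s₁ = FreeGroup.mk [(s₁, true)] from rfl, h2,
    FreeGroup.mul_mk, FreeGroup.mul_mk]
  rfl

def wordOf : Q → R → List ((B × C₀) × A) → List (((Q ⧸ B.map φ) × R) × Bool)
  | _, _, [] => []
  | P, Sr, x :: L =>
    ((P • e0 B φ, Sr), true) :: ((P • e0 B φ, Sr * ψ x.1.2), false) ::
      wordOf (P * φ ((x.1.1 : B) : A) * φ x.2) (Sr * ψ x.1.2) L

lemma Lam_prodL : ∀ (L : List ((B × C₀) × A)) (P : Q) (Sr : R),
    ∃ t : Q × R,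
      (⟨1, (P, Sr)⟩ : FreeGroup ((Q ⧸ B.map φ) × R) ⋊[fAut B φ] (Q × R)) *
          Lam B φ ψ (prodL B L) =
        ⟨FreeGroup.mk (wordOf B φ ψ P Sr L), t⟩
  | [], P, Sr => ⟨(P, Sr), by
      rw [prodL_nil, map_one, mul_one]
      refine SemidirectProduct.ext ?_ rfl
      exact FreeGroup.one_eq_mk⟩
  | x :: L, P, Sr => by
    obtain ⟨t, ht⟩ := Lam_prodL L (P * φ ((x.1.1 : B) : A) * φ x.2) (Sr * ψ x.1.2)
    refine ⟨t, ?_⟩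
    have e1 : (⟨1, (P, Sr)⟩ : FreeGroup ((Q ⧸ B.map φ) × R) ⋊[fAut B φ] (Q × R)) *
        ΛBC B φ ψ x.1 * ΛA B φ x.2 =
        ⟨FreeGroup.of (P • e0 B φ, Sr) * (FreeGroup.of (P • e0 B φ, Sr * ψ x.1.2))⁻¹,
          (P * φ ((x.1.1 : B) : A) * φ x.2, Sr * ψ x.1.2)⟩ := by
      refine SemidirectProduct.ext ?_ ?_
      · simp [uR, map_mul, map_inv, fAut_of]
      · simp [Prod.ext_iff, mul_assoc]
    have main : (⟨1, (P, Sr)⟩ : FreeGroup ((Q ⧸ B.map φ) × R) ⋊[fAut B φ] (Q × R)) *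
        Lam B φ ψ (prodL B (x :: L)) =
        ⟨FreeGroup.of (P • e0 B φ, Sr) * (FreeGroup.of (P • e0 B φ, Sr * ψ x.1.2))⁻¹,
          (P * φ ((x.1.1 : B) : A) * φ x.2, Sr * ψ x.1.2)⟩ * Lam B φ ψ (prodL B L) := by
      rw [prodL_cons, map_mul, map_mul, Lam_iBC, Lam_iA, ← mul_assoc, ← mul_assoc, e1]
    rw [main]
    have split : (⟨FreeGroup.of (P • e0 B φ, Sr) * (FreeGroup.of (P • e0 B φ, Sr * ψ x.1.2))⁻¹,
          (P * φ ((x.1.1 : B) : A) * φ x.2, Sr * ψ x.1.2)⟩ :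
        FreeGroup ((Q ⧸ B.map φ) × R) ⋊[fAut B φ] (Q × R)) =
        ⟨FreeGroup.of (P • e0 B φ, Sr) * (FreeGroup.of (P • e0 B φ, Sr * ψ x.1.2))⁻¹, 1⟩ *
        ⟨1, (P * φ ((x.1.1 : B) : A) * φ x.2, Sr * ψ x.1.2)⟩ := by
      refine SemidirectProduct.ext ?_ ?_ <;> simp
    rw [split, mul_assoc, ht]
    refine SemidirectProduct.ext ?_ (by simp)
    show (FreeGroup.of (P • e0 B φ, Sr) * (FreeGroup.of (P • e0 B φ, Sr * ψ x.1.2))⁻¹) *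
        fAut B φ 1 (FreeGroup.mk (wordOf B φ ψ (P * φ ((x.1.1 : B) : A) * φ x.2)
          (Sr * ψ x.1.2) L)) = _
    rw [map_one]
    show (FreeGroup.of (P • e0 B φ, Sr) * (FreeGroup.of (P • e0 B φ, Sr * ψ x.1.2))⁻¹) *
        FreeGroup.mk (wordOf B φ ψ (P * φ ((x.1.1 : B) : A) * φ x.2) (Sr * ψ x.1.2) L) = _
    rw [of_mul_inv_mul_mk]
    rfl

lemma smul_e0_eq (P q : Q) (h : P • e0 B φ = (P * q) • e0 B φ) : q ∈ B.map φ := by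
  rw [e0, MulAction.Quotient.smul_mk, MulAction.Quotient.smul_mk, smul_eq_mul, smul_eq_mul,
    mul_one, mul_one] at h
  have h2 := QuotientGroup.eq.mp h
  simpa using h2

lemma wordOf_chain : ∀ (L : List ((B × C₀) × A)) (P : Q) (Sr : R),
    (∀ p ∈ L, ψ p.1.2 ≠ 1) → (∀ p ∈ L.dropLast, φ p.2 ∉ B.map φ) →
    (wordOf B φ ψ P Sr L).Chain' (fun a b => ¬(a.1 = b.1 ∧ a.2 = !b.2))
  | [], _, _, _, _ => List.isChain_nil
  | x :: L, P, Sr, hc, hint => by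
    have hx : ψ x.1.2 ≠ 1 := hc x (List.mem_cons_self)
    show List.Chain' _ (((P • e0 B φ, Sr), true) :: ((P • e0 B φ, Sr * ψ x.1.2), false) ::
      wordOf B φ ψ (P * φ ((x.1.1 : B) : A) * φ x.2) (Sr * ψ x.1.2) L)
    refine List.isChain_cons_cons.mpr ?_
    constructor
    · rintro ⟨h1, -⟩
      have h2 := congrArg Prod.snd h1
      simp only at h2
      exact hx (left_eq_mul.mp h2)
    · cases L with
      | nil => exact List.isChain_singleton _
      | cons y L' =>
        show List.Chain' _ (((P • e0 B φ, Sr * ψ x.1.2), false) ::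
          (((P * φ ((x.1.1 : B) : A) * φ x.2) • e0 B φ, Sr * ψ x.1.2), true) :: _)
        refine List.isChain_cons_cons.mpr ?_
        constructor
        · rintro ⟨h1, -⟩
          have hfst := congrArg Prod.fst h1
          simp only at hfst
          have hmem : φ ((x.1.1 : B) : A) * φ x.2 ∈ B.map φ := by
            refine smul_e0_eq B φ P _ ?_
            rw [← mul_assoc]
            exact hfst
          have hb : φ ((x.1.1 : B) : A) ∈ B.map φ := ⟨(x.1.1 : B), x.1.1.2, rfl⟩
          have ha : φ x.2 ∈ B.map φ := by
            have := Subgroup.mul_mem _ (Subgroup.inv_mem _ hb) hmem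
            simpa [mul_assoc] using this
          exact hint x (by rw [List.dropLast_cons₂]; exact List.mem_cons_self) ha
        · exact wordOf_chain (y :: L') _ _
            (fun p hp => hc p (List.mem_cons_of_mem _ hp))
            (fun p hp => hint p (by rw [List.dropLast_cons₂]; exact List.mem_cons_of_mem _ hp))

end Target


section Sep

variable (C : ∀ (G : Type u) [Group G], Prop)

lemma sepA (hSub : ∀ (G : Type u) [Group G] (H : Subgroup G), C G → C H)
    (hProd : ∀ (G H : Type u) [Group G] [Group H], C G → C H → C (G × H))
    (hB : CClosed C (B : Set A)) (X : Type u) [Group X] (hX : C X) :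
    ∀ l : List A, (∀ a ∈ l, a ∉ B) →
      ∃ (Q : Type u) (_ : Group Q) (φ : A →* Q), C Q ∧ Function.Surjective φ ∧
        ∀ a ∈ l, φ a ∉ φ '' (B : Set A) := by
  intro l
  induction l with
  | nil =>
    intro _
    refine ⟨↥(⊥ : Subgroup X), inferInstance, 1, hSub X ⊥ hX, ?_, by simp⟩
    intro q
    refine ⟨1, ?_⟩
    have hq : q = 1 := Subtype.ext (Subgroup.mem_bot.mp q.2)
    rw [MonoidHom.one_apply, hq]
  | cons a l ih =>
    intro h
    obtain ⟨Q₁, iQ₁, φ₁, c₁, s₁, h₁⟩ := hB a (h a (List.mem_cons_self))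
    obtain ⟨Q₂, iQ₂, φ₂, c₂, s₂, h₂⟩ := ih (fun a' ha' => h a' (List.mem_cons_of_mem _ ha'))
    letI := iQ₁; letI := iQ₂
    refine ⟨↥(φ₁.prod φ₂).range, inferInstance, (φ₁.prod φ₂).rangeRestrict,
      hSub _ _ (hProd _ _ c₁ c₂), MonoidHom.rangeRestrict_surjective _, ?_⟩
    intro a' ha'
    rintro ⟨b, hb, heq⟩
    have hval : (φ₁.prod φ₂) b = (φ₁.prod φ₂) a' := congrArg Subtype.val heq
    rcases List.mem_cons.mp ha' with rfl | hmem
    · exact h₁ ⟨b, hb, (congrArg Prod.fst hval : φ₁ b = φ₁ a')⟩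
    · exact h₂ a' hmem ⟨b, hb, (congrArg Prod.snd hval : φ₂ b = φ₂ a')⟩

lemma sepC (hSub : ∀ (G : Type u) [Group G] (H : Subgroup G), C G → C H)
    (hProd : ∀ (G H : Type u) [Group G] [Group H], C G → C H → C (G × H))
    (hC : ResiduallyC C C₀) (X : Type u) [Group X] (hX : C X) :
    ∀ l : List C₀, (∀ c ∈ l, c ≠ 1) →
      ∃ (R : Type u) (_ : Group R) (ψ : C₀ →* R), C R ∧ Function.Surjective ψ ∧
        ∀ c ∈ l, ψ c ≠ 1 := by
  intro l
  induction l with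
  | nil =>
    intro _
    refine ⟨↥(⊥ : Subgroup X), inferInstance, 1, hSub X ⊥ hX, ?_, by simp⟩
    intro q
    refine ⟨1, ?_⟩
    have hq : q = 1 := Subtype.ext (Subgroup.mem_bot.mp q.2)
    rw [MonoidHom.one_apply, hq]
  | cons c l ih =>
    intro h
    obtain ⟨R₁, iR₁, ψ₁, c₁, s₁, h₁⟩ := hC c (h c (List.mem_cons_self))
    obtain ⟨R₂, iR₂, ψ₂, c₂, s₂, h₂⟩ := ih (fun c' hc' => h c' (List.mem_cons_of_mem _ hc'))
    letI := iR₁; letI := iR₂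
    refine ⟨↥(ψ₁.prod ψ₂).range, inferInstance, (ψ₁.prod ψ₂).rangeRestrict,
      hSub _ _ (hProd _ _ c₁ c₂), MonoidHom.rangeRestrict_surjective _, ?_⟩
    intro c' hc' heq
    have hval : (ψ₁.prod ψ₂) c' = 1 := by
      have := congrArg Subtype.val heq
      simpa using this
    rcases List.mem_cons.mp hc' with rfl | hmem
    · exact h₁ (congrArg Prod.fst hval : ψ₁ c' = 1)
    · exact h₂ c' hmem (congrArg Prod.snd hval : ψ₂ c' = 1)

end Sep

end SpecialAmalgamAux

open SpecialAmalgamAux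

/-- If `C` is closed under isomorphism, subgroups and finite direct products,
free-by-`C` groups are residually `C`, the groups `A` and `C₀` are residually
`C`, and `B ≤ A` is `C`-closed in `A`, then the special amalgam `A ⋆_B C₀`
is residually `C`. -/
theorem specialAmalgam_residuallyC (C : ∀ (G : Type u) [Group G], Prop)
    (hIso : ∀ (G H : Type u) [Group G] [Group H], G ≃* H → C G → C H)
    (hSub : ∀ (G : Type u) [Group G] (H : Subgroup G), C G → C H)
    (hProd : ∀ (G H : Type u) [Group G] [Group H], C G → C H → C (G × H))
    (hFree : ∀ (G : Type u) [Group G],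
      (∃ (N : Subgroup G) (_ : N.Normal), IsFreeGroup N ∧ C (G ⧸ N)) →
      ResiduallyC C G)
    (A C₀ : Type u) [Group A] [Group C₀] (B : Subgroup A)
    (hA : ResiduallyC C A) (hC : ResiduallyC C C₀)
    (hB : CClosed C (B : Set A)) :
    ResiduallyC C (SpecialAmalgam A B C₀) := by
  classical
  intro g hg
  by_cases hpi : piH B g = 1
  · -- the hard case : `g` lies in the kernel of the projection to `A × C₀`
    rcases isAlt_all B g with ⟨a, rfl⟩ | ⟨x, rfl⟩ | ⟨a₀, L, hL, hcs, hint, rfl⟩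
    · exfalso
      rw [piH_iA] at hpi
      have ha : a = 1 := by
        have := (Prod.ext_iff.mp hpi).1
        simpa using this
      exact hg (by rw [ha, map_one])
    · exfalso
      rw [piH_iBC] at hpi
      obtain ⟨h1, h2⟩ := Prod.ext_iff.mp hpi
      have hx : x = 1 := by
        refine Prod.ext (Subtype.ext ?_) (by simpa using h2)
        simpa using h1
      exact hg (by rw [hx, map_one])
    · -- `g` has a genuine alternating form
      obtain ⟨p0, hp0⟩ := List.exists_mem_of_ne_nil L hL
      obtain ⟨X, iX, ψ₀, cX, -, -⟩ := hC p0.1.2 (hcs p0 hp0)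
      letI := iX
      obtain ⟨Q, iQ, φ, cQ, sφ, hφ⟩ := sepA B C hSub hProd hB X cX ((L.dropLast).map Prod.snd)
        (by
          intro a ha
          obtain ⟨p, hp, rfl⟩ := List.mem_map.mp ha
          exact hint p hp)
      letI := iQ
      obtain ⟨R, iR, ψ, cR, sψ, hψ⟩ := sepC C hSub hProd hC X cX (L.map (fun p => p.1.2))
        (by
          intro c hc
          obtain ⟨p, hp, rfl⟩ := List.mem_map.mp hc
          exact hcs p hp)
      letI := iR
      obtain ⟨t, ht⟩ := Lam_prodL B φ ψ L (φ a₀) 1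
      have hg' : Lam B φ ψ (iA C₀ B a₀ * prodL B L) =
          ⟨FreeGroup.mk (wordOf B φ ψ (φ a₀) 1 L), t⟩ := by
        rw [map_mul, Lam_iA, LA_apply]
        exact ht
      have hchain := wordOf_chain B φ ψ L (φ a₀) 1
        (fun p hp => hψ p.1.2 (List.mem_map_of_mem hp))
        (by
          intro p hp hmem
          obtain ⟨b, hbB, hbeq⟩ := Subgroup.mem_map.mp hmem
          exact hφ p.2 (List.mem_map_of_mem hp) ⟨b, hbB, hbeq⟩)
      have hwne : wordOf B φ ψ (φ a₀) 1 L ≠ [] := by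
        obtain ⟨x, L', rfl⟩ := List.exists_cons_of_ne_nil hL
        exact List.cons_ne_nil _ _
      have hFne : Lam B φ ψ (iA C₀ B a₀ * prodL B L) ≠ 1 := by
        rw [hg']
        intro hEq
        have hleft := congrArg SemidirectProduct.left hEq
        simp only [SemidirectProduct.one_left] at hleft
        exact mk_ne_one (reduce_eq_self _ hchain) hwne hleft
      set Φ := Lam B φ ψ with hΦ
      set H := Φ.range with hH
      set ρ : ↥H →* Q × R := SemidirectProduct.rightHom.comp H.subtype with hρ
      have hNfree : IsFreeGroup ↥ρ.ker := by
        set j : ↥ρ.ker →* FreeGroup ((Q ⧸ B.map φ) × R) :=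
          { toFun := fun n => ((n : ↥H) : FreeGroup ((Q ⧸ B.map φ) × R) ⋊[fAut B φ] (Q × R)).left
            map_one' := rfl
            map_mul' := by
              intro n m
              have hr : ((n : ↥H) : FreeGroup ((Q ⧸ B.map φ) × R) ⋊[fAut B φ] (Q × R)).right
                  = 1 := MonoidHom.mem_ker.mp n.2
              show (((n : ↥H) : FreeGroup ((Q ⧸ B.map φ) × R) ⋊[fAut B φ] (Q × R)) *
                  ((m : ↥H) : _)).left = _
              rw [SemidirectProduct.mul_left, hr, map_one]
              rfl } with hj
        have hjinj : Function.Injective j := by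
          intro n m hnm
          have hr : ((n : ↥H) : FreeGroup ((Q ⧸ B.map φ) × R) ⋊[fAut B φ] (Q × R)).right =
              ((m : ↥H) : FreeGroup ((Q ⧸ B.map φ) × R) ⋊[fAut B φ] (Q × R)).right := by
            have h1 : ((n : ↥H) : FreeGroup ((Q ⧸ B.map φ) × R) ⋊[fAut B φ] (Q × R)).right =
                1 := MonoidHom.mem_ker.mp n.2
            have h2 : ((m : ↥H) : FreeGroup ((Q ⧸ B.map φ) × R) ⋊[fAut B φ] (Q × R)).right =
                1 := MonoidHom.mem_ker.mp m.2
            rw [h1, h2]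
          have : ((n : ↥H) : FreeGroup ((Q ⧸ B.map φ) × R) ⋊[fAut B φ] (Q × R)) =
              ((m : ↥H) : _) := SemidirectProduct.ext hnm hr
          exact Subtype.ext (Subtype.ext this)
        exact IsFreeGroup.ofMulEquiv (MonoidHom.ofInjective hjinj).symm
      have hquot : C (↥H ⧸ ρ.ker) :=
        hIso _ _ (QuotientGroup.quotientKerEquivRange ρ).symm
          (hSub _ ρ.range (hProd Q R cQ cR))
      have hres : ResiduallyC C ↥H := hFree ↥H ⟨ρ.ker, inferInstance, hNfree, hquot⟩
      have hh0 : Φ.rangeRestrict (iA C₀ B a₀ * prodL B L) ≠ 1 := by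
        intro e
        apply hFne
        have := congrArg Subtype.val e
        simpa using this
      obtain ⟨S', iS', χ, cS', sχ, hχ⟩ := hres _ hh0
      exact ⟨S', iS', χ.comp Φ.rangeRestrict, cS',
        sχ.comp Φ.rangeRestrict_surjective, hχ⟩
  · -- the easy case : `g` survives in `A × C₀`
    have hcases : (piH B g).1 ≠ 1 ∨ (piH B g).2 ≠ 1 := by
      by_contra h
      push_neg at h
      exact hpi (Prod.ext h.1 h.2)
    rcases hcases with h1 | h2
    · obtain ⟨Q, iQ, φ₁, cQ, s₁, hval⟩ := hA (piH B g).1 h1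
      letI := iQ
      refine ⟨Q, iQ, φ₁.comp ((MonoidHom.fst A C₀).comp (piH B)), cQ, ?_, by simpa using hval⟩
      intro q
      obtain ⟨a, rfl⟩ := s₁ q
      exact ⟨iA C₀ B a, by simp⟩
    · obtain ⟨R, iR, ψ₁, cR, s₁, hval⟩ := hC (piH B g).2 h2
      letI := iR
      refine ⟨R, iR, ψ₁.comp ((MonoidHom.snd A C₀).comp (piH B)), cR, ?_, by simpa using hval⟩
      intro r
      obtain ⟨c, rfl⟩ := s₁ r
      refine ⟨iBC B (1, c), by simp⟩
end

section
/- Let C be a class of groups closed under taking subgroups, let B ≤ A and C₀ be groups with C₀ nontrivial, and suppose the special amalgam G = A ⋆_B C₀ is residually C. Then A and C₀ are residually C and the subgroup B is C-closed in A. -/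
universe u

open Monoid

section Aux

variable {A C₀ : Type u} [Group A] [Group C₀] (B : Subgroup A)

/-- Lifting a pair of compatible homomorphisms to the special amalgam. -/
def SA.lift {M : Type u} [Group M] (f : A →* M) (g : B × C₀ →* M)
    (h : ∀ b : B, f b = g (b, 1)) :
    SpecialAmalgam A B C₀ →* M :=
  QuotientGroup.lift _ (Coprod.lift f g) <| by
    intro x hx
    refine (Subgroup.normalClosure_le_normal ?_) hx
    rintro y ⟨b, rfl⟩
    simp [MonoidHom.mem_ker, h b]

@[simp] lemma SA.lift_ofA {M : Type u} [Group M] (f : A →* M) (g : B × C₀ →* M)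
    (h : ∀ b : B, f b = g (b, 1)) (a : A) :
    SA.lift B f g h (SpecialAmalgam.ofA A B C₀ a) = f a := by
  show SA.lift B f g h (QuotientGroup.mk (Coprod.inl a)) = f a
  exact Coprod.lift_apply_inl f g a

@[simp] lemma SA.lift_inr {M : Type u} [Group M] (f : A →* M) (g : B × C₀ →* M)
    (h : ∀ b : B, f b = g (b, 1)) (p : B × C₀) :
    SA.lift B f g h (QuotientGroup.mk (Coprod.inr p) : SpecialAmalgam A B C₀) = g p := by
  exact Coprod.lift_apply_inr f g p

@[simp] lemma SA.lift_ofC {M : Type u} [Group M] (f : A →* M) (g : B × C₀ →* M)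
    (h : ∀ b : B, f b = g (b, 1)) (c : C₀) :
    SA.lift B f g h (SpecialAmalgam.ofC A B C₀ c) = g (1, c) := by
  show SA.lift B f g h (QuotientGroup.mk (Coprod.inr ((1, c) : B × C₀))) = g (1, c)
  exact SA.lift_inr B f g h (1, c)

/-- Retraction onto `A`. -/
def SA.retrA : SpecialAmalgam A B C₀ →* A :=
  SA.lift B (MonoidHom.id A) (B.subtype.comp (MonoidHom.fst B C₀)) (fun _ => rfl)

/-- Retraction onto `C₀`. -/
def SA.retrC : SpecialAmalgam A B C₀ →* C₀ :=
  SA.lift B (1 : A →* C₀) (MonoidHom.snd B C₀) (fun _ => rfl)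

lemma SA.ofA_injective : Function.Injective (SpecialAmalgam.ofA A B C₀) := by
  have : Function.LeftInverse (SA.retrA B) (SpecialAmalgam.ofA A B C₀) := fun a => by
    exact SA.lift_ofA B _ _ _ a
  exact this.injective

lemma SA.ofC_injective : Function.Injective (SpecialAmalgam.ofC A B C₀) := by
  have : Function.LeftInverse (SA.retrC B) (SpecialAmalgam.ofC A B C₀) := fun c => by
    exact SA.lift_ofC B _ _ _ c
  exact this.injective

/-- the shift action of `A` on functions `A ⧸ B → C₀` -/
def SA.shift : A →* MulAut ((A ⧸ B) → C₀) where
  toFun a :=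
    { toFun := fun f x => f (a⁻¹ • x)
      invFun := fun f x => f (a • x)
      left_inv := fun f => by funext x; simp
      right_inv := fun f => by funext x; simp
      map_mul' := fun f g => rfl }
  map_one' := by ext f x; simp
  map_mul' a b := by ext f x; simp [mul_smul]

@[simp] lemma SA.shift_apply (a : A) (f : (A ⧸ B) → C₀) (x : A ⧸ B) :
    SA.shift B a f x = f (a⁻¹ • x) := rfl

open scoped Classical in
noncomputable def SA.single (c : C₀) : (A ⧸ B) → C₀ :=
  fun x => if x = ((1 : A) : A ⧸ B) then c else 1

lemma SA.mk_eq_one_iff (y : A) :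
    ((y : A ⧸ B) = ((1 : A) : A ⧸ B)) ↔ y ∈ B := by
  rw [QuotientGroup.eq]
  simp [B.inv_mem_iff]

lemma SA.smul_single (b : B) (c : C₀) :
    SA.shift B (b : A) (SA.single B c) = SA.single B c := by
  funext x
  induction x using QuotientGroup.induction_on with
  | H y =>
    show SA.single B c ((b : A)⁻¹ • (y : A ⧸ B)) = SA.single B c y
    rw [MulAction.Quotient.smul_coe]
    unfold SA.single
    have h1 : (((b : A)⁻¹ • y : A) : A ⧸ B) = ((1 : A) : A ⧸ B) ↔
        ((y : A ⧸ B) = ((1 : A) : A ⧸ B)) := by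
      rw [SA.mk_eq_one_iff, SA.mk_eq_one_iff, smul_eq_mul,
        mul_mem_cancel_left (B.inv_mem b.2)]
    split_ifs with h2 h3 h3
    · rfl
    · exact absurd (h1.mp h2) h3
    · exact absurd (h1.mpr h3) h2
    · rfl

lemma SA.single_one : SA.single B (1 : C₀) = 1 := by
  funext x; unfold SA.single; split_ifs <;> rfl

noncomputable def SA.bc : (B × C₀) →* ((A ⧸ B) → C₀) ⋊[SA.shift B] A where
  toFun p := ⟨SA.single B p.2, (p.1 : A)⟩
  map_one' := by
    refine SemidirectProduct.ext ?_ rfl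
    exact SA.single_one B
  map_mul' p q := by
    refine SemidirectProduct.ext ?_ rfl
    show SA.single B (p.2 * q.2) =
      SA.single B p.2 * SA.shift B (p.1 : A) (SA.single B q.2)
    rw [SA.smul_single]
    funext x
    unfold SA.single
    simp only [Pi.mul_apply]
    split_ifs <;> simp

noncomputable def SA.theta :
    SpecialAmalgam A B C₀ →* ((A ⧸ B) → C₀) ⋊[SA.shift B] A :=
  SA.lift B SemidirectProduct.inr (SA.bc B) <| by
    intro b
    refine SemidirectProduct.ext ?_ rfl
    exact (SA.single_one B).symm

lemma SA.theta_ofA (a : A) :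
    SA.theta B (SpecialAmalgam.ofA A B C₀ a) = SemidirectProduct.inr a := by
  simp [SA.theta]

lemma SA.theta_ofC (c : C₀) :
    SA.theta B (SpecialAmalgam.ofC A B C₀ c) = ⟨SA.single B c, 1⟩ := by
  simp [SA.theta]
  rfl

/-- The key nontriviality: if `x ∉ B` and `c ≠ 1` then the commutator
`[ofA x, ofC c]` is nontrivial in the special amalgam. -/
lemma SA.key (x : A) (hx : x ∉ B) (c : C₀) (hc : c ≠ 1) :
    SpecialAmalgam.ofA A B C₀ x * SpecialAmalgam.ofC A B C₀ c *
      (SpecialAmalgam.ofA A B C₀ x)⁻¹ * (SpecialAmalgam.ofC A B C₀ c)⁻¹ ≠ 1 := by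
  intro h
  have h2 := congrArg (fun z => (SA.theta B z).left ((x : A ⧸ B))) h
  simp only [map_one, map_mul, map_inv, SA.theta_ofA, SA.theta_ofC,
    SemidirectProduct.one_left, SemidirectProduct.mul_left, SemidirectProduct.mul_right,
    SemidirectProduct.inv_left, SemidirectProduct.inv_right,
    SemidirectProduct.left_inr, SemidirectProduct.right_inr,
    Pi.mul_apply, Pi.one_apply, Pi.inv_apply, SA.shift_apply,
    inv_one, one_mul, mul_one, mul_inv_cancel, MulAut.one_apply] at h2
  have hself : (x⁻¹ : A) • ((x : A ⧸ B)) = ((1 : A) : A ⧸ B) := by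
    rw [MulAction.Quotient.smul_coe]; simp
  have hxne : ((x : A ⧸ B)) ≠ ((1 : A) : A ⧸ B) := fun hh => hx ((SA.mk_eq_one_iff B x).mp hh)
  rw [hself, show SA.single B c ((1 : A) : A ⧸ B) = c from if_pos rfl,
    show SA.single B c ((x : A ⧸ B)) = 1 from if_neg hxne] at h2
  simp at h2
  exact hc h2

set_option maxHeartbeats 1000000 in
lemma SA.ofA_comm (b : A) (hb : b ∈ B) (c : C₀) :
    SpecialAmalgam.ofA A B C₀ b * SpecialAmalgam.ofC A B C₀ c =
    SpecialAmalgam.ofC A B C₀ c * SpecialAmalgam.ofA A B C₀ b := by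
  set p : B × C₀ := (⟨b, hb⟩, 1) with hp
  have hb' : SpecialAmalgam.ofA A B C₀ b =
      (QuotientGroup.mk (Coprod.inr p) : SpecialAmalgam A B C₀) := by
    show (QuotientGroup.mk (Coprod.inl b) : SpecialAmalgam A B C₀) = _
    apply QuotientGroup.eq.mpr
    have hgen : (Coprod.inl b * (Coprod.inr p)⁻¹) ∈ Subgroup.normalClosure
        { x : Monoid.Coprod A (B × C₀) |
          ∃ b : B, x = Coprod.inl (b : A) * (Coprod.inr ((b, 1) : B × C₀))⁻¹ } :=
      Subgroup.subset_normalClosure ⟨⟨b, hb⟩, rfl⟩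
    have hN := Subgroup.normalClosure_normal (G := Monoid.Coprod A (B × C₀))
      (s := { x : Monoid.Coprod A (B × C₀) |
          ∃ b : B, x = Coprod.inl (b : A) * (Coprod.inr ((b, 1) : B × C₀))⁻¹ })
    have hmem := hN.conj_mem _ (inv_mem hgen) (Coprod.inl b)⁻¹
    have heq : (Coprod.inl b)⁻¹ * (Coprod.inl b * (Coprod.inr p)⁻¹)⁻¹ * ((Coprod.inl b)⁻¹)⁻¹ =
        (Coprod.inl b)⁻¹ * Coprod.inr p := by group
    rw [heq] at hmem
    exact hmem
  have hofC : SpecialAmalgam.ofC A B C₀ c =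
      (QuotientGroup.mk (Coprod.inr ((1, c) : B × C₀)) : SpecialAmalgam A B C₀) := rfl
  rw [hb', hofC]
  show (QuotientGroup.mk' _) (Coprod.inr p) * (QuotientGroup.mk' _) (Coprod.inr ((1, c) : B × C₀)) =
    (QuotientGroup.mk' _) (Coprod.inr ((1, c) : B × C₀)) * (QuotientGroup.mk' _) (Coprod.inr p)
  have hpc : p * ((1, c) : B × C₀) = ((1, c) : B × C₀) * p := by
    rw [hp]; ext <;> simp
  exact ((Commute.map (show Commute p ((1, c) : B × C₀) from hpc) (Coprod.inr : B × C₀ →* Monoid.Coprod A (B × C₀))).map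
    (QuotientGroup.mk' (Subgroup.normalClosure
      { x : Monoid.Coprod A (B × C₀) |
        ∃ b : B, x = Coprod.inl (b : A) * (Coprod.inr ((b, 1) : B × C₀))⁻¹ }))).eq

lemma res_transfer (C : ∀ (G : Type u) [Group G], Prop)
    (hSub : ∀ (G : Type u) [Group G] (H : Subgroup G), C G → C H)
    {G H : Type u} [Group G] [Group H] (ι : H →* G) (hι : Function.Injective ι)
    (hG : ResiduallyC C G) : ResiduallyC C H := by
  intro h hh
  have hne1 : ι h ≠ 1 := by
    rw [← map_one ι]; exact fun e => hh (hι e)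
  obtain ⟨Q, _, φ, hQ, -, hne⟩ := hG (ι h) hne1
  refine ⟨(φ.comp ι).range, inferInstance, (φ.comp ι).rangeRestrict,
    hSub Q _ hQ, MonoidHom.rangeRestrict_surjective _, ?_⟩
  intro h1
  apply hne
  simpa using congrArg Subtype.val h1

end Aux

/-- If `C` is closed under isomorphism and subgroups, `C₀` is nontrivial, and
the special amalgam `A ⋆_B C₀` is residually `C`, then `A` and `C₀` are
residually `C` and `B` is `C`-closed in `A`. -/
theorem residuallyC_of_specialAmalgam (C : ∀ (G : Type u) [Group G], Prop)
    (hIso : ∀ (G H : Type u) [Group G] [Group H], G ≃* H → C G → C H)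
    (hSub : ∀ (G : Type u) [Group G] (H : Subgroup G), C G → C H)
    (A C₀ : Type u) [Group A] [Group C₀] (B : Subgroup A) [Nontrivial C₀]
    (hG : ResiduallyC C (SpecialAmalgam A B C₀)) :
    ResiduallyC C A ∧ ResiduallyC C C₀ ∧ CClosed C (B : Set A) := by
  refine ⟨res_transfer C hSub _ (SA.ofA_injective B) hG,
    res_transfer C hSub _ (SA.ofC_injective B) hG, ?_⟩
  intro a ha
  obtain ⟨c, hc⟩ := exists_ne (1 : C₀)
  have hg := SA.key B a (fun h => ha h) c hc
  obtain ⟨Q, _, φ, hQ, -, hne⟩ := hG _ hg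
  refine ⟨(φ.comp (SpecialAmalgam.ofA A B C₀)).range, inferInstance,
    (φ.comp (SpecialAmalgam.ofA A B C₀)).rangeRestrict, hSub Q _ hQ,
    MonoidHom.rangeRestrict_surjective _, ?_⟩
  rintro ⟨b0, hb0, heq⟩
  have hphi : φ (SpecialAmalgam.ofA A B C₀ b0) = φ (SpecialAmalgam.ofA A B C₀ a) := by
    simpa using congrArg Subtype.val heq
  apply hne
  have hone : SpecialAmalgam.ofA A B C₀ b0 * SpecialAmalgam.ofC A B C₀ c *
      (SpecialAmalgam.ofA A B C₀ b0)⁻¹ * (SpecialAmalgam.ofC A B C₀ c)⁻¹ = 1 := by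
    rw [SA.ofA_comm B b0 hb0 c]; group
  have hkey : φ (SpecialAmalgam.ofA A B C₀ b0) * φ (SpecialAmalgam.ofC A B C₀ c) *
      (φ (SpecialAmalgam.ofA A B C₀ b0))⁻¹ * (φ (SpecialAmalgam.ofC A B C₀ c))⁻¹ = 1 := by
    rw [← map_inv φ, ← map_inv φ, ← map_mul φ, ← map_mul φ, ← map_mul φ, hone, map_one]
  simp only [map_mul, map_inv]
  rw [← hphi]
  exact hkey
end

section
/- Let C be a class of groups closed under taking subgroups and under taking finite direct products, and let G be a residually C group. If R ≤ G is a retract of G, i.e., there is a homomorphism ρ : G → G with ρ ∘ ρ = ρ and image equal to R, then R is C-closed in G. -/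
universe u

open Monoid

/-- If `C` is closed under isomorphism, subgroups and finite direct products
and `G` is residually `C`, then every retract `R` of `G` is `C`-closed
in `G`. -/
theorem retract_CClosed (C : ∀ (G : Type u) [Group G], Prop)
    (hIso : ∀ (G H : Type u) [Group G] [Group H], G ≃* H → C G → C H)
    (hSub : ∀ (G : Type u) [Group G] (H : Subgroup G), C G → C H)
    (hProd : ∀ (G H : Type u) [Group G] [Group H], C G → C H → C (G × H))
    (G : Type u) [Group G] (hG : ResiduallyC C G)
    (R : Subgroup G) (ρ : G →* G) (hρ : ρ.comp ρ = ρ)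
    (hrange : Set.range ρ = (R : Set G)) :
    CClosed C (R : Set G) := by
  intro g hg
  -- ρ acts as identity on R
  have hfix : ∀ x ∈ (R : Set G), ρ x = x := by
    intro x hx
    rw [← hrange] at hx
    obtain ⟨y, rfl⟩ := hx
    have := congrArg (fun f : G →* G => f y) hρ
    simpa using this
  have hne : g * (ρ g)⁻¹ ≠ 1 := by
    intro h
    have : g = ρ g := by
      have := mul_inv_eq_one.mp h
      exact this
    apply hg
    rw [← hrange]
    exact ⟨g, this.symm⟩
  obtain ⟨Q, _, φ, hCQ, hsurj, hφne⟩ := hG _ hne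
  have hφgne : φ g ≠ φ (ρ g) := by
    intro h
    apply hφne
    rw [map_mul, map_inv, h, mul_inv_cancel]
  set ψ : G →* Q × Q := φ.prod (φ.comp ρ) with hψ
  refine ⟨ψ.range, inferInstance, ψ.rangeRestrict, hSub _ ψ.range (hProd Q Q hCQ hCQ),
    ψ.rangeRestrict_surjective, ?_⟩
  rintro ⟨x, hx, hxe⟩
  have hxe' : ψ x = ψ g := congrArg Subtype.val hxe
  have h1 : φ x = φ g := congrArg Prod.fst hxe'
  have h2 : φ (ρ x) = φ (ρ g) := congrArg Prod.snd hxe'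
  rw [hfix x hx, h1] at h2
  exact hφgne h2
end

section
/- Let C be a class of groups closed under taking finite direct products, let A and C₀ be groups belonging to C and let B ≤ A be a subgroup. Then the special amalgam G = A ⋆_B C₀ is free-by-C: there exists a normal subgroup N ⊴ G such that N is a free group and G/N ∈ C. -/
universe u

open Monoid

namespace SAP

attribute [local instance] Classical.propDecidable

noncomputable section

variable {A : Type u} [Group A] {B : Subgroup A} {C₀ : Type u} [Group C₀]

local notation "G'" => SpecialAmalgam A B C₀

/-- The quotient map from the coproduct. -/
def mkG : Monoid.Coprod A (B × C₀) →* SpecialAmalgam A B C₀ :=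
  QuotientGroup.mk' _

lemma ofA_eq (a : A) : SpecialAmalgam.ofA A B C₀ a = mkG (Coprod.inl a) := rfl

lemma ofC_eq (c : C₀) : SpecialAmalgam.ofC A B C₀ c = mkG (Coprod.inr ((1, c) : B × C₀)) := rfl

lemma mkG_inl_eq_inr (b : B) :
    mkG (Coprod.inl (b : A)) = mkG (Coprod.inr ((b, 1) : B × C₀)) := by
  apply (QuotientGroup.eq (s := _)).2
  have hmem : Coprod.inl (b : A) * (Coprod.inr ((b, 1) : B × C₀))⁻¹ ∈
      Subgroup.normalClosure { x : Monoid.Coprod A (B × C₀) |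
        ∃ b : B, x = Coprod.inl (b : A) * (Coprod.inr ((b, 1) : B × C₀))⁻¹ } :=
    Subgroup.subset_normalClosure ⟨b, rfl⟩
  have hinv := (Subgroup.normalClosure _).inv_mem hmem
  have hconj := Subgroup.normalClosure_normal.conj_mem _ hinv ((Coprod.inl (b : A))⁻¹)
  simpa [mul_assoc] using hconj

lemma ofA_coe_eq (b : B) :
    SpecialAmalgam.ofA A B C₀ (b : A) = mkG (Coprod.inr ((b, 1) : B × C₀)) :=
  mkG_inl_eq_inr b

/-- Elements of (the image of) `B` commute with elements of (the image of) `C₀`. -/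
lemma ofA_mul_ofC_comm (b : B) (c : C₀) :
    SpecialAmalgam.ofA A B C₀ (b : A) * SpecialAmalgam.ofC A B C₀ c =
      SpecialAmalgam.ofC A B C₀ c * SpecialAmalgam.ofA A B C₀ (b : A) := by
  rw [ofA_coe_eq, ofC_eq, ← map_mul, ← map_mul, ← map_mul, ← map_mul]
  congr 1
  have : ((b, 1) : B × C₀) * (1, c) = ((1 : B), c) * (b, 1) := by
    ext <;> simp
  rw [this]

lemma conj_ofC_of_mem (b : A) (hb : b ∈ B) (c : C₀) :
    SpecialAmalgam.ofA A B C₀ b * SpecialAmalgam.ofC A B C₀ c *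
      (SpecialAmalgam.ofA A B C₀ b)⁻¹ = SpecialAmalgam.ofC A B C₀ c := by
  rw [ofA_mul_ofC_comm ⟨b, hb⟩ c, mul_assoc, mul_inv_cancel, mul_one]

/-- Universal property of the special amalgam. -/
def liftG {K : Type*} [Group K] (f : A →* K) (g : B × C₀ →* K)
    (h : ∀ b : B, f (b : A) = g ((b, 1) : B × C₀)) :
    SpecialAmalgam A B C₀ →* K :=
  QuotientGroup.lift _ (Coprod.lift f g) (by
    intro x hx
    refine Subgroup.normalClosure_le_normal ?_ hx
    rintro y ⟨b, rfl⟩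
    simp [MonoidHom.mem_ker, h b])

@[simp] lemma liftG_mkG {K : Type*} [Group K] (f : A →* K) (g : B × C₀ →* K)
    (h : ∀ b : B, f (b : A) = g ((b, 1) : B × C₀)) (x : Monoid.Coprod A (B × C₀)) :
    liftG f g h (mkG x) = Coprod.lift f g x := rfl

@[simp] lemma liftG_ofA {K : Type*} [Group K] (f : A →* K) (g : B × C₀ →* K)
    (h : ∀ b : B, f (b : A) = g ((b, 1) : B × C₀)) (a : A) :
    liftG f g h (SpecialAmalgam.ofA A B C₀ a) = f a := by
  rw [ofA_eq, liftG_mkG, Coprod.lift_apply_inl]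

@[simp] lemma liftG_ofC {K : Type*} [Group K] (f : A →* K) (g : B × C₀ →* K)
    (h : ∀ b : B, f (b : A) = g ((b, 1) : B × C₀)) (c : C₀) :
    liftG f g h (SpecialAmalgam.ofC A B C₀ c) = g ((1, c) : B × C₀) := by
  rw [ofC_eq, liftG_mkG, Coprod.lift_apply_inr]

lemma homG_ext {K : Type*} [Group K] {f g : SpecialAmalgam A B C₀ →* K}
    (h1 : ∀ a : A, f (SpecialAmalgam.ofA A B C₀ a) = g (SpecialAmalgam.ofA A B C₀ a))
    (h2 : ∀ c : C₀, f (SpecialAmalgam.ofC A B C₀ c) = g (SpecialAmalgam.ofC A B C₀ c)) :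
    f = g := by
  apply QuotientGroup.monoidHom_ext
  apply Coprod.hom_ext
  · ext a
    exact h1 a
  · ext x
    have hx : (Coprod.inr x : Monoid.Coprod A (B × C₀)) =
        Coprod.inr ((x.1, 1) : B × C₀) * Coprod.inr ((1, x.2) : B × C₀) := by
      rw [← map_mul]
      congr 1
      ext <;> simp
    have key : mkG (Coprod.inr x) =
        SpecialAmalgam.ofA A B C₀ (x.1 : A) * SpecialAmalgam.ofC A B C₀ x.2 := by
      rw [hx, map_mul, ← ofA_coe_eq, ← ofC_eq]
    show f (mkG (Coprod.inr x)) = g (mkG (Coprod.inr x))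
    rw [key, map_mul, map_mul, h1, h2]

/-- The fold homomorphism `G → A × C₀`. -/
def phi : SpecialAmalgam A B C₀ →* A × C₀ :=
  liftG (MonoidHom.inl A C₀) ((B.subtype).prodMap (MonoidHom.id C₀)) (fun _ => rfl)

@[simp] lemma phi_ofA (a : A) : phi (SpecialAmalgam.ofA A B C₀ a) = (a, 1) := by
  exact liftG_ofA _ _ _ a

@[simp] lemma phi_ofC (c : C₀) : phi (SpecialAmalgam.ofC A B C₀ c) = (1, c) := by
  exact liftG_ofC _ _ _ c

lemma phi_surjective : Function.Surjective (phi (A := A) (B := B) (C₀ := C₀)) := by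
  rintro ⟨a, c⟩
  refine ⟨SpecialAmalgam.ofA A B C₀ a * SpecialAmalgam.ofC A B C₀ c, ?_⟩
  simp [Prod.ext_iff]

/-! ### The free product of copies of `C₀` indexed by `A ⧸ B`, with the permutation
action of `A`. -/

/-- Free product of copies of `C₀` indexed by cosets. -/
abbrev MM (A : Type u) [Group A] (B : Subgroup A) (C₀ : Type u) [Group C₀] : Type u :=
  Monoid.CoprodI (fun _ : A ⧸ B => C₀)

/-- The base coset. -/
def q0 : A ⧸ B := QuotientGroup.mk 1

lemma smul_q0 (b : B) : (b : A) • (q0 : A ⧸ B) = q0 := by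
  show (b : A) • (QuotientGroup.mk 1 : A ⧸ B) = QuotientGroup.mk 1
  rw [MulAction.Quotient.smul_mk]
  exact (QuotientGroup.eq (s := B)).2 (by simpa using B.inv_mem b.2)

lemma q0_out_mem : (q0 : A ⧸ B).out ∈ B := by
  have h : (QuotientGroup.mk ((q0 : A ⧸ B).out) : A ⧸ B) = QuotientGroup.mk 1 :=
    QuotientGroup.out_eq' _
  simpa using (QuotientGroup.eq (s := B)).1 h.symm

/-- Permutation endomorphism of the free product induced by `a : A`. -/
def permEnd (a : A) : MM A B C₀ →* MM A B C₀ :=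
  CoprodI.lift (fun q => (CoprodI.of (M := fun _ : A ⧸ B => C₀) (i := a • q)))

@[simp] lemma permEnd_of (a : A) (q : A ⧸ B) (c : C₀) :
    permEnd a (CoprodI.of (M := fun _ : A ⧸ B => C₀) (i := q) c) =
      CoprodI.of (M := fun _ : A ⧸ B => C₀) (i := a • q) c :=
  CoprodI.lift_of _ _

lemma permEnd_comp (a a' : A) :
    (permEnd (B := B) (C₀ := C₀) a).comp (permEnd a') = permEnd (a * a') := by
  refine CoprodI.ext_hom _ _ fun q => ?_
  ext c
  simp [mul_smul]

lemma permEnd_one : permEnd (B := B) (C₀ := C₀) (1 : A) = MonoidHom.id _ := by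
  refine CoprodI.ext_hom _ _ fun q => ?_
  ext c
  simp

/-- The action of `A` on the free product of copies of `C₀` by permuting the factors. -/
def rho : A →* MulAut (MM A B C₀) where
  toFun a := MonoidHom.toMulEquiv (permEnd a) (permEnd a⁻¹)
    (by rw [permEnd_comp, inv_mul_cancel, permEnd_one])
    (by rw [permEnd_comp, mul_inv_cancel, permEnd_one])
  map_one' := by
    ext x
    exact DFunLike.congr_fun permEnd_one x
  map_mul' a a' := by
    ext x
    exact (DFunLike.congr_fun (permEnd_comp a a') x).symm

@[simp] lemma rho_apply (a : A) (x : MM A B C₀) : rho a x = permEnd a x := rfl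

/-- Folding the free product back to `C₀`. -/
def fold : MM A B C₀ →* C₀ :=
  CoprodI.lift (fun _ => MonoidHom.id C₀)

@[simp] lemma fold_of (q : A ⧸ B) (c : C₀) :
    fold (CoprodI.of (M := fun _ : A ⧸ B => C₀) (i := q) c) = c :=
  CoprodI.lift_of _ _

/-! ### The embedding `G → MM ⋊ A`. -/

/-- The map `B × C₀ → MM ⋊ A`. -/
def gB : B × C₀ →* SemidirectProduct (MM A B C₀) A rho where
  toFun x := ⟨CoprodI.of (M := fun _ : A ⧸ B => C₀) (i := q0) x.2, (x.1 : A)⟩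
  map_one' := by ext <;> simp
  map_mul' x y := by
    ext
    · show CoprodI.of (M := fun _ : A ⧸ B => C₀) (i := q0) (x.2 * y.2) = _ * rho (x.1 : A) _
      rw [rho_apply, permEnd_of, smul_q0, map_mul]
    · simp

/-- The (split) embedding of the special amalgam into `MM ⋊ A`. -/
def Phi : SpecialAmalgam A B C₀ →* SemidirectProduct (MM A B C₀) A rho :=
  liftG SemidirectProduct.inr gB (fun b => by
    ext
    · show (1 : MM A B C₀) = CoprodI.of (M := fun _ : A ⧸ B => C₀) (i := q0) (1 : C₀)
      simp
    · rfl)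

@[simp] lemma Phi_ofA (a : A) :
    Phi (SpecialAmalgam.ofA A B C₀ a) = SemidirectProduct.inr a := by
  simp [Phi]

@[simp] lemma Phi_ofC (c : C₀) :
    Phi (SpecialAmalgam.ofC A B C₀ c) =
      SemidirectProduct.inl (CoprodI.of (M := fun _ : A ⧸ B => C₀) (i := q0) c) := by
  rw [Phi, liftG_ofC]
  ext <;> rfl

/-- Conjugation of an element of `A` by a coset representative. -/
lemma conj_ofC_eq_of_mk_eq {a₁ a₂ : A} (h : (QuotientGroup.mk a₁ : A ⧸ B) = QuotientGroup.mk a₂)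
    (c : C₀) :
    SpecialAmalgam.ofA A B C₀ a₁ * SpecialAmalgam.ofC A B C₀ c *
        (SpecialAmalgam.ofA A B C₀ a₁)⁻¹ =
      SpecialAmalgam.ofA A B C₀ a₂ * SpecialAmalgam.ofC A B C₀ c *
        (SpecialAmalgam.ofA A B C₀ a₂)⁻¹ := by
  have hb : a₁⁻¹ * a₂ ∈ B := (QuotientGroup.eq (s := B)).1 h
  have ha₂ : a₂ = a₁ * (a₁⁻¹ * a₂) := by group
  rw [ha₂, map_mul, mul_inv_rev]
  have := conj_ofC_of_mem (a₁⁻¹ * a₂) hb c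
  calc SpecialAmalgam.ofA A B C₀ a₁ * SpecialAmalgam.ofC A B C₀ c *
        (SpecialAmalgam.ofA A B C₀ a₁)⁻¹
      = SpecialAmalgam.ofA A B C₀ a₁ * (SpecialAmalgam.ofA A B C₀ (a₁⁻¹ * a₂) *
          SpecialAmalgam.ofC A B C₀ c * (SpecialAmalgam.ofA A B C₀ (a₁⁻¹ * a₂))⁻¹) *
          (SpecialAmalgam.ofA A B C₀ a₁)⁻¹ := by rw [this]
    _ = _ := by group

/-- The retraction `MM → G` sending the copy of `C₀` at coset `q` to the conjugate
of `C₀` by a representative of `q`. -/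
def PsiM : MM A B C₀ →* SpecialAmalgam A B C₀ :=
  CoprodI.lift (fun q =>
    ((MulAut.conj (SpecialAmalgam.ofA A B C₀ q.out)).toMonoidHom).comp
      (SpecialAmalgam.ofC A B C₀))

@[simp] lemma PsiM_of (q : A ⧸ B) (c : C₀) :
    PsiM (CoprodI.of (M := fun _ : A ⧸ B => C₀) (i := q) c) =
      SpecialAmalgam.ofA A B C₀ q.out * SpecialAmalgam.ofC A B C₀ c *
        (SpecialAmalgam.ofA A B C₀ q.out)⁻¹ := by
  rw [PsiM, CoprodI.lift_of]
  rfl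

/-- The retraction `MM ⋊ A → G`. -/
def Psi : SemidirectProduct (MM A B C₀) A rho →* SpecialAmalgam A B C₀ :=
  SemidirectProduct.lift PsiM (SpecialAmalgam.ofA A B C₀) (by
    intro a
    refine CoprodI.ext_hom _ _ fun q => ?_
    ext c
    show PsiM (rho a (CoprodI.of (M := fun _ : A ⧸ B => C₀) (i := q) c)) = _
    rw [rho_apply, permEnd_of, PsiM_of]
    show _ = MulAut.conj (SpecialAmalgam.ofA A B C₀ a) (PsiM (CoprodI.of (i := q) c))
    rw [PsiM_of, MulAut.conj_apply]
    have hmk : (QuotientGroup.mk (a • q).out : A ⧸ B) = QuotientGroup.mk (a * q.out) := by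
      rw [QuotientGroup.out_eq']
      show a • q = _
      conv_lhs => rw [← QuotientGroup.out_eq' q]
      rw [MulAction.Quotient.smul_mk, smul_eq_mul]
    rw [conj_ofC_eq_of_mk_eq hmk c, map_mul]
    group)

lemma Psi_Phi : Psi.comp Phi = MonoidHom.id (SpecialAmalgam A B C₀) := by
  refine homG_ext (fun a => ?_) (fun c => ?_)
  · show Psi (Phi (SpecialAmalgam.ofA A B C₀ a)) = SpecialAmalgam.ofA A B C₀ a
    rw [Phi_ofA]
    exact SemidirectProduct.lift_inr _ _ _ _
  · show Psi (Phi (SpecialAmalgam.ofC A B C₀ c)) = SpecialAmalgam.ofC A B C₀ c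
    rw [Phi_ofC]
    have hl : Psi (SemidirectProduct.inl (CoprodI.of (M := fun _ : A ⧸ B => C₀) (i := q0) c)) =
        PsiM (CoprodI.of (M := fun _ : A ⧸ B => C₀) (i := q0) c) :=
      SemidirectProduct.lift_inl _ _ _ _
    rw [hl, PsiM_of]
    exact conj_ofC_of_mem _ q0_out_mem c

lemma Phi_injective : Function.Injective (Phi (A := A) (B := B) (C₀ := C₀)) := by
  intro x y h
  have := DFunLike.congr_fun (Psi_Phi (A := A) (B := B) (C₀ := C₀))
  calc x = Psi (Phi x) := (this x).symm
    _ = Psi (Phi y) := by rw [h]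
    _ = y := this y

/-! ### The free group and the action of `C₀` on it. -/

/-- The free group containing the kernel. -/
abbrev FF (A : Type u) [Group A] (B : Subgroup A) (C₀ : Type u) [Group C₀] : Type u :=
  FreeGroup ((A ⧸ B) × C₀)

/-- The would-be generators `x_{q,c}`, with the convention `x_{q,1} = 1`. -/
def xg (q : A ⧸ B) (c : C₀) : FF A B C₀ :=
  if c = 1 then 1 else FreeGroup.of (q, c)

@[simp] lemma xg_one (q : A ⧸ B) : xg (C₀ := C₀) q 1 = 1 := if_pos rfl

lemma xg_of_ne (q : A ⧸ B) {c : C₀} (hc : c ≠ 1) : xg q c = FreeGroup.of (q, c) := if_neg hc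

/-- The endomorphism of the free group induced by `d : C₀`. -/
def actEnd (d : C₀) : FF A B C₀ →* FF A B C₀ :=
  FreeGroup.lift (fun p => if p.2 = 1 then FreeGroup.of p
    else (xg p.1 d)⁻¹ * xg p.1 (d * p.2))

lemma actEnd_xg (d : C₀) (q : A ⧸ B) (e : C₀) :
    actEnd (A := A) (B := B) d (xg q e) = (xg q d)⁻¹ * xg q (d * e) := by
  by_cases he : e = 1
  · subst he
    simp
  · rw [xg_of_ne q he, actEnd, FreeGroup.lift_apply_of, if_neg he]

lemma actEnd_of_one (d : C₀) (q : A ⧸ B) :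
    actEnd (A := A) (B := B) d (FreeGroup.of (q, (1 : C₀))) = FreeGroup.of (q, (1 : C₀)) := by
  rw [actEnd, FreeGroup.lift_apply_of, if_pos rfl]

lemma actEnd_comp (d d' : C₀) :
    (actEnd (A := A) (B := B) d).comp (actEnd d') = actEnd (d * d') := by
  refine FreeGroup.ext_hom _ _ fun p => ?_
  obtain ⟨q, c⟩ := p
  by_cases hc : c = 1
  · subst hc
    simp [actEnd_of_one]
  · show actEnd d (actEnd d' (FreeGroup.of (q, c))) = actEnd (d * d') (FreeGroup.of (q, c))
    rw [← xg_of_ne q hc, actEnd_xg, actEnd_xg, map_mul, map_inv, actEnd_xg, actEnd_xg,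
      ← mul_assoc, ← mul_assoc]
    group

lemma actEnd_one : actEnd (A := A) (B := B) (1 : C₀) = MonoidHom.id _ := by
  refine FreeGroup.ext_hom _ _ fun p => ?_
  obtain ⟨q, c⟩ := p
  by_cases hc : c = 1
  · subst hc
    simp [actEnd_of_one]
  · show actEnd 1 (FreeGroup.of (q, c)) = FreeGroup.of (q, c)
    rw [← xg_of_ne q hc, actEnd_xg, one_mul, xg_one, inv_one, one_mul]

/-- The action of `C₀` on the free group. -/
def sigma : C₀ →* MulAut (FF A B C₀) where
  toFun d := MonoidHom.toMulEquiv (actEnd d) (actEnd d⁻¹)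
    (by rw [actEnd_comp, inv_mul_cancel, actEnd_one])
    (by rw [actEnd_comp, mul_inv_cancel, actEnd_one])
  map_one' := by
    ext x
    exact DFunLike.congr_fun actEnd_one x
  map_mul' d d' := by
    ext x
    exact (DFunLike.congr_fun (actEnd_comp d d') x).symm

@[simp] lemma sigma_apply (d : C₀) (x : FF A B C₀) : sigma d x = actEnd d x := rfl

/-! ### The embedding `MM → FF ⋊ C₀`. -/

/-- The map from the `q`-th copy of `C₀` into `FF ⋊ C₀`. -/
def homq (q : A ⧸ B) : C₀ →* SemidirectProduct (FF A B C₀) C₀ sigma where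
  toFun c := ⟨xg q c, c⟩
  map_one' := by ext <;> simp
  map_mul' c c' := by
    ext
    · show xg q (c * c') = xg q c * sigma c (xg q c')
      rw [sigma_apply, actEnd_xg, ← mul_assoc, mul_inv_cancel, one_mul]
    · rfl

/-- The (split) embedding of `MM` into `FF ⋊ C₀`. -/
def Phi2 : MM A B C₀ →* SemidirectProduct (FF A B C₀) C₀ sigma :=
  CoprodI.lift homq

@[simp] lemma Phi2_of (q : A ⧸ B) (c : C₀) :
    Phi2 (CoprodI.of (M := fun _ : A ⧸ B => C₀) (i := q) c) =
      (⟨xg q c, c⟩ : SemidirectProduct (FF A B C₀) C₀ sigma) :=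
  CoprodI.lift_of _ _

/-- The retraction `FF → MM`. -/
def Psif : FF A B C₀ →* MM A B C₀ :=
  FreeGroup.lift (fun p => CoprodI.of (M := fun _ : A ⧸ B => C₀) (i := p.1) p.2 *
    (CoprodI.of (M := fun _ : A ⧸ B => C₀) (i := q0) p.2)⁻¹)

lemma Psif_xg (q : A ⧸ B) (c : C₀) :
    Psif (xg q c) = CoprodI.of (M := fun _ : A ⧸ B => C₀) (i := q) c *
      (CoprodI.of (M := fun _ : A ⧸ B => C₀) (i := q0) c)⁻¹ := by
  by_cases hc : c = 1
  · subst hc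
    simp
  · rw [xg_of_ne q hc, Psif, FreeGroup.lift_apply_of]

/-- The retraction `FF ⋊ C₀ → MM`. -/
def Psi2 : SemidirectProduct (FF A B C₀) C₀ sigma →* MM A B C₀ :=
  SemidirectProduct.lift Psif (CoprodI.of (M := fun _ : A ⧸ B => C₀) (i := q0)) (by
    intro d
    refine FreeGroup.ext_hom _ _ fun p => ?_
    obtain ⟨q, c⟩ := p
    show Psif (sigma d (FreeGroup.of (q, c))) = MulAut.conj _ (Psif (FreeGroup.of (q, c)))
    by_cases hc : c = 1
    · subst hc
      rw [sigma_apply, actEnd_of_one]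
      have h1 : Psif (FreeGroup.of (q, (1 : C₀))) = 1 := by
        rw [Psif, FreeGroup.lift_apply_of]
        simp
      rw [h1]
      simp
    · rw [← xg_of_ne q hc, sigma_apply, actEnd_xg, map_mul, map_inv, Psif_xg, Psif_xg,
        Psif_xg, MulAut.conj_apply]
      simp only [map_mul]
      group)

lemma Psi2_Phi2 : Psi2.comp Phi2 = MonoidHom.id (MM A B C₀) := by
  refine CoprodI.ext_hom _ _ fun q => ?_
  ext c
  show Psi2 (Phi2 (CoprodI.of (i := q) c)) = CoprodI.of (i := q) c
  rw [Phi2_of]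
  have hsplit : (⟨xg q c, c⟩ : SemidirectProduct (FF A B C₀) C₀ sigma) =
      SemidirectProduct.inl (xg q c) * SemidirectProduct.inr c := by
    ext <;> simp
  rw [hsplit, map_mul, Psi2, SemidirectProduct.lift_inl, SemidirectProduct.lift_inr, Psif_xg]
  group

lemma Psi2_injective_aux : ∀ x : MM A B C₀, Psi2 (Phi2 x) = x := fun x =>
  DFunLike.congr_fun Psi2_Phi2 x

lemma rightHom_Phi2 :
    SemidirectProduct.rightHom.comp (Phi2 (A := A) (B := B) (C₀ := C₀)) = fold := by
  refine CoprodI.ext_hom _ _ fun q => ?_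
  ext c
  rw [MonoidHom.comp_apply, MonoidHom.comp_apply, MonoidHom.comp_apply, Phi2_of, fold_of]
  rfl

/-! ### Relating `Phi` to `phi`. -/

lemma rightHom_Phi :
    SemidirectProduct.rightHom.comp (Phi (A := A) (B := B) (C₀ := C₀)) =
      (MonoidHom.fst A C₀).comp phi := by
  refine homG_ext (fun a => ?_) (fun c => ?_)
  · show SemidirectProduct.rightHom (Phi (SpecialAmalgam.ofA A B C₀ a)) = _
    rw [Phi_ofA]
    simp
  · show SemidirectProduct.rightHom (Phi (SpecialAmalgam.ofC A B C₀ c)) = _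
    rw [Phi_ofC]
    simp

/-- The auxiliary homomorphism recording the total `C₀`-weight. -/
def xi : SemidirectProduct (MM A B C₀) A rho →* C₀ :=
  SemidirectProduct.lift fold 1 (by
    intro a
    refine CoprodI.ext_hom _ _ fun q => ?_
    ext c
    show fold (rho a (CoprodI.of (i := q) c)) = MulAut.conj ((1 : A →* C₀) a) (fold _)
    rw [rho_apply, permEnd_of, fold_of, fold_of]
    simp)

lemma xi_apply (x : SemidirectProduct (MM A B C₀) A rho) : xi x = fold x.left := by
  conv_lhs => rw [← SemidirectProduct.inl_left_mul_inr_right x]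
  rw [map_mul, xi, SemidirectProduct.lift_inl, SemidirectProduct.lift_inr]
  simp

lemma xi_Phi :
    xi.comp (Phi (A := A) (B := B) (C₀ := C₀)) = (MonoidHom.snd A C₀).comp phi := by
  refine homG_ext (fun a => ?_) (fun c => ?_)
  · show xi (Phi (SpecialAmalgam.ofA A B C₀ a)) = _
    rw [Phi_ofA, xi, SemidirectProduct.lift_inr]
    simp
  · show xi (Phi (SpecialAmalgam.ofC A B C₀ c)) = _
    rw [Phi_ofC, xi, SemidirectProduct.lift_inl, fold_of]
    simp

/-! ### The kernel embeds into the free group. -/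

/-- The kernel of `phi`. -/
abbrev NN : Subgroup (SpecialAmalgam A B C₀) := (phi (A := A) (B := B) (C₀ := C₀)).ker

lemma Phi_right_eq_one {x : SpecialAmalgam A B C₀} (hx : x ∈ NN) : (Phi x).right = 1 := by
  have h := DFunLike.congr_fun (rightHom_Phi (A := A) (B := B) (C₀ := C₀)) x
  have hx1 : phi x = 1 := hx
  simp only [MonoidHom.comp_apply, hx1, map_one] at h
  exact h

lemma fold_Phi_left_eq_one {x : SpecialAmalgam A B C₀} (hx : x ∈ NN) :
    fold (Phi x).left = 1 := by
  have h := DFunLike.congr_fun (xi_Phi (A := A) (B := B) (C₀ := C₀)) x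
  have hx1 : phi x = 1 := hx
  simp only [MonoidHom.comp_apply, hx1, map_one] at h
  rw [← xi_apply]
  exact h

lemma Phi2_right_eq_one {x : SpecialAmalgam A B C₀} (hx : x ∈ NN) :
    (Phi2 (Phi x).left).right = 1 := by
  have h := DFunLike.congr_fun (rightHom_Phi2 (A := A) (B := B) (C₀ := C₀)) (Phi x).left
  rw [MonoidHom.comp_apply] at h
  rw [show (Phi2 (Phi x).left).right = SemidirectProduct.rightHom (Phi2 (Phi x).left) from rfl,
    h, fold_Phi_left_eq_one hx]

/-- The embedding of the kernel into the free group. -/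
def eN : NN (A := A) (B := B) (C₀ := C₀) →* FF A B C₀ :=
  MonoidHom.mk' (fun n => (Phi2 (Phi (n : SpecialAmalgam A B C₀)).left).left) (by
    rintro ⟨n, hn⟩ ⟨m, hm⟩
    show (Phi2 (Phi (n * m)).left).left = _
    rw [map_mul, SemidirectProduct.mul_left, Phi_right_eq_one hn, map_one,
      MulAut.one_apply, map_mul, SemidirectProduct.mul_left, Phi2_right_eq_one hn,
      map_one, MulAut.one_apply])

lemma eN_injective : Function.Injective (eN (A := A) (B := B) (C₀ := C₀)) := by
  rw [injective_iff_map_eq_one]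
  rintro ⟨n, hn⟩ h
  have hleft : (Phi2 (Phi n).left).left = 1 := h
  have hright : (Phi2 (Phi n).left).right = 1 := Phi2_right_eq_one hn
  have h2 : Phi2 (Phi n).left = 1 := by
    ext
    · rw [hleft]; rfl
    · rw [hright]; rfl
  have h3 : (Phi n).left = 1 := by
    have := Psi2_injective_aux (Phi n).left
    rw [h2, map_one] at this
    exact this.symm
  have h4 : Phi n = 1 := by
    ext
    · rw [h3]; rfl
    · rw [Phi_right_eq_one hn]; rfl
  have h5 : n = 1 := by
    have := DFunLike.congr_fun (Psi_Phi (A := A) (B := B) (C₀ := C₀)) n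
    rw [MonoidHom.comp_apply, h4, map_one] at this
    exact this.symm
  exact Subtype.ext h5

end

end SAP

/-- If `C` is closed under isomorphism and finite direct products and
`A, C₀ ∈ C`, then the special amalgam `A ⋆_B C₀` is free-by-`C`. -/
theorem specialAmalgam_free_by_C (C : ∀ (G : Type u) [Group G], Prop)
    (hIso : ∀ (G H : Type u) [Group G] [Group H], G ≃* H → C G → C H)
    (hProd : ∀ (G H : Type u) [Group G] [Group H], C G → C H → C (G × H))
    (A C₀ : Type u) [Group A] [Group C₀] (B : Subgroup A)
    (hA : C A) (hC : C C₀) :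
    ∃ (N : Subgroup (SpecialAmalgam A B C₀)) (_ : N.Normal),
      IsFreeGroup N ∧ C (SpecialAmalgam A B C₀ ⧸ N) := by
  classical
  haveI hnorm : (SAP.NN (A := A) (B := B) (C₀ := C₀)).Normal := MonoidHom.normal_ker _
  refine ⟨SAP.NN (A := A) (B := B) (C₀ := C₀), hnorm, ?_, ?_⟩
  · exact IsFreeGroup.ofMulEquiv (MonoidHom.ofInjective SAP.eN_injective).symm
  · have e : (SpecialAmalgam A B C₀ ⧸ SAP.NN (A := A) (B := B) (C₀ := C₀)) ≃* A × C₀ :=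
      QuotientGroup.quotientKerEquivOfSurjective _ SAP.phi_surjective
    exact hIso (A × C₀) _
      e.symm
      (hProd A C₀ hA hC)
end

section
/- Let B ≤ A and C₀ be groups and let G = A ⋆_B C₀ be their special amalgam. Suppose g = a₀ c₁ a₁ ⋯ cₙ aₙ is in reduced form, meaning aᵢ ∈ A for i = 0,…,n, cⱼ ∈ C₀ with cⱼ ≠ 1 for j = 1,…,n, and aᵢ ∉ B for i = 1,…,n−1. If n ≥ 1, then g is not the trivial element of G. -/
universe u

open Monoid

/-- The element `a₀ c₁ a₁ ⋯ cₙ aₙ` of the special amalgam `A ⋆_B C₀`. -/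
def SpecialAmalgam.word (A : Type u) [Group A] (B : Subgroup A) (C₀ : Type u) [Group C₀]
    (n : ℕ) (a : Fin (n + 1) → A) (c : Fin n → C₀) : SpecialAmalgam A B C₀ :=
  SpecialAmalgam.ofA A B C₀ (a 0) *
    (List.ofFn fun j : Fin n =>
      SpecialAmalgam.ofC A B C₀ (c j) * SpecialAmalgam.ofA A B C₀ (a j.succ)).prod


namespace SAProof

variable (A C₀ : Type u) [Group A] [Group C₀] (B : Subgroup A)

/-- The two-element family `true ↦ A`, `false ↦ B × C₀`. -/
@[reducible]
def GFam : Bool → Type u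
  | true => A
  | false => B × C₀

instance : ∀ b, Group (GFam A C₀ B b)
  | true => inferInstanceAs (Group A)
  | false => inferInstanceAs (Group (B × C₀))

/-- The diagram maps. -/
def ψ : ∀ b, (↥B) →* GFam A C₀ B b
  | true => B.subtype
  | false => MonoidHom.inl B C₀

lemma ψ_inj : ∀ b, Function.Injective (ψ A C₀ B b)
  | true => B.subtype_injective
  | false => fun x y h => by simpa [ψ] using congrArg Prod.fst h

/-- The comparison homomorphism from the special amalgam to the indexed pushout. -/
def π : SpecialAmalgam A B C₀ →* PushoutI (ψ A C₀ B) :=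
  QuotientGroup.lift _
    (Coprod.lift (PushoutI.of (φ := ψ A C₀ B) true) (PushoutI.of (φ := ψ A C₀ B) false))
    (by
      intro x hx
      refine Subgroup.normalClosure_le_normal ?_ hx
      rintro y ⟨b, rfl⟩
      simp only [SetLike.mem_coe, MonoidHom.mem_ker, map_mul, map_inv,
        Coprod.lift_apply_inl, Coprod.lift_apply_inr]
      have h1 : PushoutI.of (φ := ψ A C₀ B) true ((b : A)) = PushoutI.base (ψ A C₀ B) b :=
        PushoutI.of_apply_eq_base (ψ A C₀ B) true b
      have h2 : PushoutI.of (φ := ψ A C₀ B) false ((b, 1) : B × C₀) = PushoutI.base (ψ A C₀ B) b :=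
        PushoutI.of_apply_eq_base (ψ A C₀ B) false b
      exact mul_inv_eq_one.2 (h1.trans h2.symm))

lemma π_ofA (a : A) : π A C₀ B (SpecialAmalgam.ofA A B C₀ a) = PushoutI.of true a := rfl

lemma π_ofC (c : C₀) :
    π A C₀ B (SpecialAmalgam.ofC A B C₀ c) = PushoutI.of (φ := ψ A C₀ B) false (1, c) := rfl

lemma not_of_true_range (m : CoprodI.NeWord (GFam A C₀ B) false false)
    (hm : ∀ l ∈ m.toList, l.2 ∉ (ψ A C₀ B l.1).range) (x : A) :
    PushoutI.ofCoprodI (φ := ψ A C₀ B) m.prod ≠ PushoutI.of true x := by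
  intro h
  by_cases hx : x ∈ B
  · have hmem : PushoutI.ofCoprodI (φ := ψ A C₀ B) m.toWord.prod ∈
        (PushoutI.base (ψ A C₀ B)).range := by
      refine ⟨⟨x, hx⟩, ?_⟩
      rw [← PushoutI.of_apply_eq_base (ψ A C₀ B) true ⟨x, hx⟩]
      exact h.symm
    have hred : PushoutI.Reduced (ψ A C₀ B) m.toWord := hm
    have := hred.eq_empty_of_mem_range (ψ_inj A C₀ B) hmem
    exact m.toList_ne_nil (congrArg CoprodI.Word.toList this)
  · have hx1 : (x : GFam A C₀ B true)⁻¹ ≠ 1 := by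
      intro h1
      exact hx (by simpa using (inv_eq_one.1 h1) ▸ B.one_mem)
    set m' := m.append (by decide : (false : Bool) ≠ true)
      (CoprodI.NeWord.singleton (M := GFam A C₀ B) (i := true) x⁻¹ hx1) with hm'def
    have hred : PushoutI.Reduced (ψ A C₀ B) m'.toWord := by
      intro l hl
      rcases List.mem_append.1 hl with hl | hl
      · exact hm l hl
      · simp only [CoprodI.NeWord.toList, List.mem_singleton] at hl
        subst hl
        rintro ⟨b, hb⟩
        have hbx : (b : A) = x⁻¹ := hb
        exact hx (by rw [← inv_inv x, ← hbx]; exact B.inv_mem b.2)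
    have hmem : PushoutI.ofCoprodI (φ := ψ A C₀ B) m'.toWord.prod ∈
        (PushoutI.base (ψ A C₀ B)).range := by
      have : PushoutI.ofCoprodI (φ := ψ A C₀ B) m'.prod = 1 := by
        rw [hm'def, CoprodI.NeWord.append_prod, map_mul, CoprodI.NeWord.prod_singleton,
          PushoutI.ofCoprodI_of, h]
        exact mul_inv_cancel _
      rw [show m'.toWord.prod = m'.prod from rfl, this]
      exact one_mem _
    have := hred.eq_empty_of_mem_range (ψ_inj A C₀ B) hmem
    exact m'.toList_ne_nil (congrArg CoprodI.Word.toList this)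

lemma exists_neword : ∀ (n : ℕ) (a : Fin (n + 2) → A) (c : Fin (n + 1) → C₀),
    (∀ j, c j ≠ 1) → (∀ i : Fin (n + 2), 0 < (i : ℕ) → (i : ℕ) < n + 1 → a i ∉ B) →
    ∃ m : CoprodI.NeWord (GFam A C₀ B) false false,
      (∀ l ∈ m.toList, l.2 ∉ (ψ A C₀ B l.1).range) ∧
      PushoutI.ofCoprodI (φ := ψ A C₀ B) m.prod =
        (List.ofFn fun j : Fin (n + 1) =>
          PushoutI.of (φ := ψ A C₀ B) false ((1 : B), c j) *
            PushoutI.of (φ := ψ A C₀ B) true (a j.succ)).prod *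
          (PushoutI.of (φ := ψ A C₀ B) true (a (Fin.last (n + 1))))⁻¹
  | 0, a, c, hc, ha => by
    have hc0 : (((1 : B), c 0) : GFam A C₀ B false) ≠ 1 := by
      intro h
      exact hc 0 (by simpa using congrArg Prod.snd h)
    refine ⟨CoprodI.NeWord.singleton (M := GFam A C₀ B) (i := false) ((1 : B), c 0) hc0, ?_, ?_⟩
    · intro l hl
      simp only [CoprodI.NeWord.toList, List.mem_singleton] at hl
      subst hl
      rintro ⟨b, hb⟩
      exact hc 0 (by simpa [ψ] using (congrArg Prod.snd hb).symm)
    · rw [CoprodI.NeWord.prod_singleton, PushoutI.ofCoprodI_of]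
      simp [List.ofFn_succ, mul_assoc, Fin.last]
  | (n + 1), a, c, hc, ha => by
    obtain ⟨m', hm', hp'⟩ := exists_neword n (fun i => a i.succ) (fun j => c j.succ)
      (fun j => hc j.succ)
      (fun i hi1 hi2 => ha i.succ (by simp) (by simpa using Nat.succ_lt_succ hi2))
    have hc0 : (((1 : B), c 0) : GFam A C₀ B false) ≠ 1 := by
      intro h
      exact hc 0 (by simpa using congrArg Prod.snd h)
    have ha1 : a ((0 : Fin (n + 2)).succ) ∉ B := ha _ (by simp) (by simp)
    have ha1' : (a ((0 : Fin (n + 2)).succ) : GFam A C₀ B true) ≠ 1 := by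
      intro h
      exact ha1 (by simpa using h ▸ B.one_mem)
    refine ⟨CoprodI.NeWord.append
        (CoprodI.NeWord.singleton (M := GFam A C₀ B) (i := false) ((1 : B), c 0) hc0)
        (by decide)
        (CoprodI.NeWord.append
          (CoprodI.NeWord.singleton (M := GFam A C₀ B) (i := true)
            (a ((0 : Fin (n + 2)).succ)) ha1')
          (by decide) m'), ?_, ?_⟩
    · intro l hl
      simp only [CoprodI.NeWord.toList, List.mem_append, List.mem_singleton] at hl
      rcases hl with hl | hl | hl
      · subst hl
        rintro ⟨b, hb⟩
        exact hc 0 (by simpa [ψ] using (congrArg Prod.snd hb).symm)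
      · subst hl
        rintro ⟨b, hb⟩
        have hbx : (b : A) = a ((0 : Fin (n + 2)).succ) := hb
        exact ha1 (hbx ▸ b.2)
      · exact hm' l hl
    · rw [List.ofFn_succ, List.prod_cons]
      simp only [CoprodI.NeWord.append_prod, CoprodI.NeWord.prod_singleton, map_mul,
        PushoutI.ofCoprodI_of, hp', Fin.succ_last, Function.comp]
      simp [mul_assoc, Fin.succ_last]

end SAProof

/-- A word `a₀ c₁ a₁ ⋯ cₙ aₙ` in reduced form (all `cⱼ ≠ 1`, the intermediate
`aᵢ` outside `B`) with `n ≥ 1` represents a nontrivial element of the special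
amalgam `A ⋆_B C₀`. -/
theorem specialAmalgam_reduced_word_ne_one
    (A C₀ : Type u) [Group A] [Group C₀] (B : Subgroup A)
    (n : ℕ) (hn : 1 ≤ n) (a : Fin (n + 1) → A) (c : Fin n → C₀)
    (hc : ∀ j : Fin n, c j ≠ 1)
    (ha : ∀ i : Fin (n + 1), 0 < (i : ℕ) → (i : ℕ) < n → a i ∉ B) :
    SpecialAmalgam.word A B C₀ n a c ≠ 1 := by
  obtain ⟨k, rfl⟩ : ∃ k, n = k + 1 := ⟨n - 1, (Nat.succ_pred_eq_of_pos hn).symm⟩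
  intro hone
  obtain ⟨m, hm, hp⟩ := SAProof.exists_neword A C₀ B k a c hc ha
  have h1 : SAProof.π A C₀ B (SpecialAmalgam.word A B C₀ (k + 1) a c) = 1 := by
    rw [hone, map_one]
  unfold SpecialAmalgam.word at h1
  rw [map_mul, map_list_prod, List.map_ofFn] at h1
  have hcomp : (⇑(SAProof.π A C₀ B) ∘ fun j : Fin (k + 1) =>
      SpecialAmalgam.ofC A B C₀ (c j) * SpecialAmalgam.ofA A B C₀ (a j.succ)) =
      fun j : Fin (k + 1) =>
        PushoutI.of (φ := SAProof.ψ A C₀ B) false ((1 : B), c j) *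
          PushoutI.of (φ := SAProof.ψ A C₀ B) true (a j.succ) := by
    funext j
    rw [Function.comp_apply, map_mul, SAProof.π_ofC, SAProof.π_ofA]
  rw [hcomp, SAProof.π_ofA] at h1
  have hP : (List.ofFn fun j : Fin (k + 1) =>
      PushoutI.of (φ := SAProof.ψ A C₀ B) false ((1 : B), c j) *
        PushoutI.of (φ := SAProof.ψ A C₀ B) true (a j.succ)).prod =
      (PushoutI.of (φ := SAProof.ψ A C₀ B) true (a 0))⁻¹ := by
    exact (mul_eq_one_iff_inv_eq.mp h1).symm
  have hX : PushoutI.ofCoprodI (φ := SAProof.ψ A C₀ B) m.prod =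
      PushoutI.of (φ := SAProof.ψ A C₀ B) true ((a 0)⁻¹ * (a (Fin.last (k + 1)))⁻¹) := by
    rw [hp, hP, map_mul, map_inv, map_inv]
  exact SAProof.not_of_true_range A C₀ B m hm _ hX
end

section
/- Let B ≤ A and C₀ be groups and let G = A ⋆_B C₀ be their special amalgam. Suppose g = a₀ c₁ a₁ ⋯ cₙ aₙ and f = x₀ y₁ x₁ ⋯ y_m x_m are both in reduced form (i.e., all aᵢ, xᵢ ∈ A, all cⱼ, yⱼ ∈ C₀ are nontrivial, and the intermediate A-letters a₁,…,aₙ₋₁ and x₁,…,x_{m−1} lie outside B), with n, m ≥ 1. If f = g in G, then m = n and cᵢ = yᵢ for all i = 1,…,n. -/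
universe u

open Monoid

open Monoid.PushoutI Monoid.PushoutI.NormalWord Subgroup Function


section Aux

variable (A C₀ : Type u) [Group A] [Group C₀] (B : Subgroup A)

/-- Index family for the pushout: `true ↦ A`, `false ↦ B × C₀`. -/
def SAFam : Bool → Type u := fun i => match i with
  | true => A
  | false => (B × C₀ : Type u)

instance SAFamGroup : ∀ i, Group (SAFam A C₀ B i) := fun i => match i with
  | true => inferInstanceAs (Group A)
  | false => inferInstanceAs (Group (B × C₀))

/-- The diagram maps. -/
def SAφ : ∀ i, (B : Type u) →* SAFam A C₀ B i := fun i => match i with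
  | true => B.subtype
  | false => MonoidHom.inl B C₀

theorem SAφ_injective : ∀ i, Injective (SAφ A C₀ B i) := fun i => match i with
  | true => B.subtype_injective
  | false => fun a b h => congrArg Prod.fst h

end Aux

section Aux2

variable {A C₀ : Type u} [Group A] [Group C₀] {B : Subgroup A}
variable {d : Transversal (SAφ A C₀ B)}

/-- The list of `C₀`-components of letters of a normal word. -/
def SActr (w : NormalWord d) : List C₀ :=
  w.toList.filterMap fun p => match p with
    | ⟨true, _⟩ => none
    | ⟨false, g⟩ => some g.2

theorem SActr_cons_true (g : SAFam A C₀ B true) (w : NormalWord d)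
    (hmw : w.fstIdx ≠ some true) (hgr : g ∉ (SAφ A C₀ B true).range) :
    SActr (cons g w hmw hgr) = SActr w := rfl

theorem SAcompl_snd (x : SAFam A C₀ B false) :
    ((((d.compl false).equiv x).2 : SAFam A C₀ B false) : B × C₀).2 = x.2 := by
  obtain ⟨b, hb⟩ := ((d.compl false).equiv x).1.2
  have h := Subgroup.IsComplement.equiv_snd_eq_inv_mul (d.compl false) x
  rw [← hb] at h
  rw [congrArg Prod.snd h]
  show ((((b : B), (1:C₀)) : B × C₀)⁻¹ * (show B × C₀ from x)).2 = (show B × C₀ from x).2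
  simp
  exact one_mul x.2

theorem SActr_cons_false (g : SAFam A C₀ B false) (w : NormalWord d)
    (hmw : w.fstIdx ≠ some false) (hgr : g ∉ (SAφ A C₀ B false).range) :
    SActr (cons g w hmw hgr) = g.2 :: SActr w := by
  have h1 : SActr (cons g w hmw hgr) =
      ((((d.compl false).equiv (g * (SAφ A C₀ B false) w.head)).2 :
        SAFam A C₀ B false) : B × C₀).2 :: SActr w := rfl
  rw [h1, SAcompl_snd]
  show ((show B × C₀ from g) * (((w.head : B), (1:C₀)) : B × C₀)).2 :: SActr w = _
  simp
  exact mul_one g.2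

end Aux2
section Aux3

variable {A C₀ : Type u} [Group A] [Group C₀] {B : Subgroup A}

/-- `of true` as a hom from `A`. -/
def SAofA : A →* PushoutI (SAφ A C₀ B) := of (φ := SAφ A C₀ B) true

/-- `of false` as a hom from `B × C₀`. -/
def SAofBC : (B × C₀) →* PushoutI (SAφ A C₀ B) := of (φ := SAφ A C₀ B) false

variable {d : Transversal (SAφ A C₀ B)}

theorem SAfstIdx_empty : (empty : NormalWord d).fstIdx = none := rfl

theorem SAfstIdx_cons {i} (g : SAFam A C₀ B i) (w : NormalWord d)
    (hmw : w.fstIdx ≠ some i) (hgr : g ∉ (SAφ A C₀ B i).range) :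
    (cons g w hmw hgr).fstIdx = some i := rfl

theorem SAnotrange_true {a : A} (ha : a ∉ B) :
    a ∉ (SAφ A C₀ B true).range := by
  rintro ⟨b, hb⟩
  have hb' : (b : A) = a := hb
  exact ha (hb' ▸ b.2)

theorem SAnotrange_false (b : B) {c : C₀} (hc : c ≠ 1) :
    ((b, c) : B × C₀) ∉ (SAφ A C₀ B false).range := by
  rintro ⟨b', hb'⟩
  exact hc (congrArg Prod.snd hb').symm

theorem SAofA_coe (b : B) : SAofA (A := A) (C₀ := C₀) (B := B) (b : A) =
    base (SAφ A C₀ B) b :=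
  of_apply_eq_base (SAφ A C₀ B) true b

theorem SAofBC_base (b : B) : SAofBC (A := A) (C₀ := C₀) (B := B) (b, 1) =
    base (SAφ A C₀ B) b :=
  of_apply_eq_base (SAφ A C₀ B) false b

theorem SAprod_cons_false (g : B × C₀) (w : NormalWord d)
    (hmw : w.fstIdx ≠ some false) (hgr : g ∉ (SAφ A C₀ B false).range) :
    (cons (i := false) g w hmw hgr).prod = SAofBC g * w.prod :=
  prod_cons _ _ _ _

theorem SAprod_cons_true (g : A) (w : NormalWord d)
    (hmw : w.fstIdx ≠ some true) (hgr : g ∉ (SAφ A C₀ B true).range) :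
    (cons (i := true) g w hmw hgr).prod = SAofA g * w.prod :=
  prod_cons _ _ _ _

theorem SAmain (l : List (C₀ × A)) (hne : l ≠ [])
    (hc : ∀ p ∈ l, p.1 ≠ 1)
    (hint : ∀ (i : ℕ) (h : i + 1 < l.length), (l.get ⟨i, Nat.lt_of_succ_lt h⟩).2 ∉ B) :
    ∃ w : NormalWord d,
      w.prod = (l.map (fun p => SAofBC ((1 : B), p.1) * SAofA p.2)).prod ∧
      SActr w = l.map Prod.fst ∧ w.fstIdx = some false := by
  induction l with
  | nil => exact absurd rfl hne
  | cons p l ih =>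
    obtain ⟨c, a⟩ := p
    rcases eq_or_ne l [] with rfl | hl
    · -- singleton case
      have hc1 : c ≠ 1 := hc _ List.mem_cons_self
      by_cases hB : a ∈ B
      · refine ⟨cons (i := false) ((⟨a, hB⟩, c) : B × C₀) empty
          (by rw [SAfstIdx_empty]; simp) (SAnotrange_false _ hc1), ?_, ?_, rfl⟩
        · rw [SAprod_cons_false, prod_empty, mul_one]
          have : ((⟨a, hB⟩, c) : B × C₀) = ((1 : B), c) * ((⟨a, hB⟩ : B), (1 : C₀)) := by
            simp
          rw [this, map_mul, SAofBC_base, ← SAofA_coe]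
          simp
        · erw [SActr_cons_false]
          rfl
      · refine ⟨cons (i := false) (((1 : B), c) : B × C₀)
          (cons (i := true) a empty
            (by rw [SAfstIdx_empty]; simp) (SAnotrange_true hB))
          (by erw [SAfstIdx_cons]; simp) (SAnotrange_false _ hc1), ?_, ?_, rfl⟩
        · erw [SAprod_cons_false, SAprod_cons_true, prod_empty, mul_one]
          simp [mul_assoc]
        · erw [SActr_cons_false, SActr_cons_true]
          rfl
    · have ha : a ∉ B := by
        have := hint 0 (by
          cases l with
          | nil => exact absurd rfl hl
          | cons q l' => simp)
        simpa using this
      obtain ⟨w, hw, hctr, hfst⟩ := ih hl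
        (fun q hq => hc q (List.mem_cons_of_mem _ hq))
        (fun i h => by
          have := hint (i + 1) (by simpa using Nat.succ_lt_succ h)
          simpa using this)
      refine ⟨cons (i := false) (((1 : B), c) : B × C₀)
        (cons (i := true) a w (by rw [hfst]; simp) (SAnotrange_true ha))
        (by intro h; have h' : (some true : Option Bool) = some false := h; simp at h')
        (SAnotrange_false _ (hc _ List.mem_cons_self)),
        ?_, ?_, rfl⟩
      · erw [SAprod_cons_false, SAprod_cons_true, hw]
        simp [mul_assoc]
      · erw [SActr_cons_false, SActr_cons_true, hctr]
        rfl

theorem SAprepend (a : A) (w : NormalWord d) (hfst : w.fstIdx = some false) :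
    ∃ w' : NormalWord d, w'.prod = SAofA a * w.prod ∧ SActr w' = SActr w := by
  by_cases hB : a ∈ B
  · refine ⟨(⟨a, hB⟩ : B) • w, ?_, rfl⟩
    rw [prod_base_smul, ← SAofA_coe]
  · exact ⟨cons (i := true) a w (by rw [hfst]; simp)
      (SAnotrange_true hB), SAprod_cons_true _ _ _ _, SActr_cons_true _ _ _ _⟩

end Aux3
section Aux4

variable (A C₀ : Type u) [Group A] [Group C₀] (B : Subgroup A)

/-- The comparison homomorphism from the special amalgam to the pushout. -/
def SAΦ : SpecialAmalgam A B C₀ →* PushoutI (SAφ A C₀ B) :=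
  QuotientGroup.lift _ (Coprod.lift SAofA SAofBC) (fun x hx =>
    MonoidHom.mem_ker.1 (Subgroup.normalClosure_le_normal (by
      rintro y ⟨b, rfl⟩
      rw [SetLike.mem_coe, MonoidHom.mem_ker]
      simp [Coprod.lift_apply_inl, Coprod.lift_apply_inr, SAofA_coe, SAofBC_base]) hx))

theorem SAΦ_ofA (a : A) : SAΦ A C₀ B (SpecialAmalgam.ofA A B C₀ a) = SAofA a := by
  rw [show SAΦ A C₀ B (SpecialAmalgam.ofA A B C₀ a) =
    Coprod.lift SAofA SAofBC (Coprod.inl a) from rfl, Coprod.lift_apply_inl]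

theorem SAΦ_ofC (c : C₀) : SAΦ A C₀ B (SpecialAmalgam.ofC A B C₀ c) =
    SAofBC ((1 : B), c) := by
  rw [show SAΦ A C₀ B (SpecialAmalgam.ofC A B C₀ c) =
    Coprod.lift SAofA SAofBC (Coprod.inr (MonoidHom.inr B C₀ c)) from rfl,
    Coprod.lift_apply_inr]
  rfl

theorem SAΦ_word (k : ℕ) (u : Fin (k + 1) → A) (v : Fin k → C₀) :
    SAΦ A C₀ B (SpecialAmalgam.word A B C₀ k u v) =
    SAofA (u 0) * ((List.ofFn fun j : Fin k => ((v j, u j.succ) : C₀ × A)).map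
      (fun p => SAofBC ((1 : B), p.1) * SAofA p.2)).prod := by
  rw [SpecialAmalgam.word, map_mul, map_list_prod, List.map_ofFn, List.map_ofFn, SAΦ_ofA]
  refine congrArg _ (congrArg _ (congrArg _ (funext fun j => ?_)))
  simp only [Function.comp_apply, map_mul, SAΦ_ofA, SAΦ_ofC]

end Aux4

/-- If two words `a₀ c₁ a₁ ⋯ cₙ aₙ` and `x₀ y₁ x₁ ⋯ y_m x_m` in reduced form,
with `n, m ≥ 1`, represent the same element of the special amalgam
`A ⋆_B C₀`, then `m = n` and `cᵢ = yᵢ` for all `i`. -/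
theorem specialAmalgam_reduced_word_unique
    (A C₀ : Type u) [Group A] [Group C₀] (B : Subgroup A)
    (n m : ℕ) (hn : 1 ≤ n) (hm : 1 ≤ m)
    (a : Fin (n + 1) → A) (c : Fin n → C₀)
    (x : Fin (m + 1) → A) (y : Fin m → C₀)
    (hc : ∀ j : Fin n, c j ≠ 1)
    (ha : ∀ i : Fin (n + 1), 0 < (i : ℕ) → (i : ℕ) < n → a i ∉ B)
    (hy : ∀ j : Fin m, y j ≠ 1)
    (hx : ∀ i : Fin (m + 1), 0 < (i : ℕ) → (i : ℕ) < m → x i ∉ B)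
    (heq : SpecialAmalgam.word A B C₀ m x y = SpecialAmalgam.word A B C₀ n a c) :
    m = n ∧ ∀ (i : ℕ) (hi : i < n) (hj : i < m), c ⟨i, hi⟩ = y ⟨i, hj⟩ := by
  obtain ⟨d⟩ := transversal_nonempty (SAφ A C₀ B) (SAφ_injective A C₀ B)
  have heq' := congrArg (SAΦ A C₀ B) heq
  rw [SAΦ_word, SAΦ_word] at heq'
  -- build normal words for both sides
  have hmain : ∀ (k : ℕ), 1 ≤ k → ∀ (u : Fin (k + 1) → A) (v : Fin k → C₀),
      (∀ j : Fin k, v j ≠ 1) →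
      (∀ i : Fin (k + 1), 0 < (i : ℕ) → (i : ℕ) < k → u i ∉ B) →
      ∃ w : NormalWord d,
        w.prod = SAofA (u 0) * ((List.ofFn fun j : Fin k => ((v j, u j.succ) : C₀ × A)).map
          (fun p => SAofBC ((1 : B), p.1) * SAofA p.2)).prod ∧
        SActr w = List.ofFn v := by
    intro k hk u v hv hu
    obtain ⟨w, hwprod, hwctr, hwfst⟩ := SAmain
      (d := d) (List.ofFn fun j : Fin k => ((v j, u j.succ) : C₀ × A))
      (by simp [← List.length_eq_zero_iff]; omega)
      (by
        intro p hp
        rw [List.mem_ofFn] at hp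
        obtain ⟨j, rfl⟩ := hp
        exact hv j)
      (by
        intro i h
        rw [List.length_ofFn] at h
        rw [List.get_ofFn]
        refine hu _ ?_ ?_ <;> simp <;> omega)
    obtain ⟨w', hw'prod, hw'ctr⟩ := SAprepend (u 0) w hwfst
    refine ⟨w', by rw [hw'prod, hwprod], ?_⟩
    rw [hw'ctr, hwctr, List.map_ofFn]
    rfl
  obtain ⟨wx, hwxprod, hwxctr⟩ := hmain m hm x y hy hx
  obtain ⟨wa, hwaprod, hwactr⟩ := hmain n hn a c hc ha
  have hw : wx = wa := NormalWord.prod_injective (by rw [hwxprod, hwaprod, heq'])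
  have hlists : List.ofFn y = List.ofFn c := by rw [← hwxctr, ← hwactr, hw]
  have hmn : m = n := by
    have := congrArg List.length hlists
    simpa using this
  subst hmn
  refine ⟨rfl, fun i hi hj => ?_⟩
  have := List.ofFn_injective hlists
  rw [this]
end

section
/- Let Γ = (V,E) be a simplicial graph and let 𝒢 = {G_v | v ∈ V} be a family of residually finite groups. Then the graph product Γ𝒢 is residually finite. -/
universe u

open Monoid
open scoped commutatorElement

/-- The graph product of the family `G` over the simplicial graph `Γ`:
the quotient of the free product `∗_v G v` by the normal closure of the
commutators `[g_u, g_v]` for adjacent vertices `u, v`. -/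
def GraphProduct {V : Type u} (Γ : SimpleGraph V) (G : V → Type u)
    [∀ v, Group (G v)] : Type u :=
  CoprodI G ⧸ Subgroup.normalClosure
    { x : CoprodI G | ∃ (u v : V) (gu : G u) (gv : G v),
        Γ.Adj u v ∧ x = ⁅CoprodI.of gu, CoprodI.of gv⁆ }

instance {V : Type u} (Γ : SimpleGraph V) (G : V → Type u) [∀ v, Group (G v)] :
    Group (GraphProduct Γ G) :=
  QuotientGroup.Quotient.group _

/-- A group is residually finite if every nontrivial element survives in a
finite surjective homomorphic image. -/
def ResiduallyFinite (G : Type u) [Group G] : Prop :=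
  ∀ g : G, g ≠ 1 → ∃ (Q : Type u) (_ : Group Q) (φ : G →* Q),
    Finite Q ∧ Function.Surjective φ ∧ φ g ≠ 1


set_option maxHeartbeats 1000000
set_option linter.unusedSectionVars false
set_option linter.unusedVariables false

open Finsupp

namespace GPRF

variable {V : Type u} (Γ : SimpleGraph V) {Q : V → Type u} [∀ v, Group (Q v)]

/-- Letters: a vertex together with a group element. -/
abbrev Ltr (Q : V → Type u) := (v : V) × Q v

/-- `vis Γ v l` : the list `l` has a "visible" occurrence of vertex `v`,
i.e. some letter with vertex `v` preceded only by letters adjacent to `v`. -/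
def vis (v : V) : List (Ltr Q) → Prop
  | [] => False
  | y :: t => y.1 = v ∨ (Γ.Adj v y.1 ∧ vis v t)

/-- Reduced words. -/
def Red : List (Ltr Q) → Prop
  | [] => True
  | x :: t => x.2 ≠ 1 ∧ ¬ vis Γ x.1 t ∧ Red t

lemma vis_congr {v : V} : ∀ {l l' : List (Ltr Q)},
    l.map (·.1) = l'.map (·.1) → (vis Γ v l ↔ vis Γ v l')
  | [], [], _ => Iff.rfl
  | [], _ :: _, h => by simp at h
  | _ :: _, [], h => by simp at h
  | x :: t, x' :: t', h => by
    simp only [List.map_cons, List.cons.injEq] at h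
    rw [vis, vis, h.1, vis_congr h.2]

variable (Q)
/-- The ambient free module over `𝔽₂` on all words. -/
abbrev M := (List (Ltr Q)) →₀ (ZMod 2)
variable {Q}

lemma Msum (m : M Q) : m + m = 0 := by
  have : (2 : ZMod 2) = 0 := by decide
  calc m + m = (2 : ZMod 2) • m := by rw [two_smul]
  _ = 0 := by rw [this, zero_smul]

/-- basis vector -/
noncomputable def e (l : List (Ltr Q)) : M Q := Finsupp.single l 1

/-- cons as a linear map -/
noncomputable def Cm (x : Ltr Q) : M Q →ₗ[ZMod 2] M Q := Finsupp.lmapDomain _ _ (List.cons x)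

open Classical in
/-- cons, killing trivial letters -/
noncomputable def CE (x : Ltr Q) : M Q →ₗ[ZMod 2] M Q := if x.2 = 1 then 0 else Cm x

@[simp] lemma Cm_e (x : Ltr Q) (l : List (Ltr Q)) : Cm x (e l) = e (x :: l) := by
  simp [Cm, e, Finsupp.lmapDomain_apply, Finsupp.mapDomain_single]

lemma CE_triv {x : Ltr Q} (h : x.2 = 1) : CE x = 0 := by simp [CE, h]

lemma CE_nontriv {x : Ltr Q} (h : x.2 ≠ 1) : CE x = Cm x := by simp [CE, h]

open Classical in
/-- The "merge" operation of `g ∈ Q v` into a list with a visible `v`-letter. -/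
noncomputable def mrg (v : V) (g : Q v) : List (Ltr Q) → M Q
  | [] => 0
  | ⟨u, a⟩ :: t =>
    if h : u = v then
      (CE ⟨v, g * (h ▸ a)⟩ + CE ⟨v, g⟩ + CE ⟨u, a⟩) (e t)
    else Cm ⟨u, a⟩ (mrg v g t)

open Classical in
/-- Prepend `g` as a new letter, unless trivial or the length bound `n` is exceeded. -/
noncomputable def Pd (n : ℕ) (v : V) (g : Q v) (l : List (Ltr Q)) : M Q :=
  if l.length + 1 ≤ n then CE ⟨v, g⟩ (e l) else 0

open Classical in
/-- the action of `g ∈ Q v` on basis words -/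
noncomputable def actF (n : ℕ) (v : V) (g : Q v) (l : List (Ltr Q)) : M Q :=
  if vis Γ v l then mrg v g l else Pd n v g l

/-- the action as a linear endomorphism -/
noncomputable def Act (n : ℕ) (v : V) (g : Q v) : M Q →ₗ[ZMod 2] M Q :=
  Finsupp.linearCombination (ZMod 2) (actF Γ n v g)

/-- linear extension of mrg -/
noncomputable def Mrg (v : V) (g : Q v) : M Q →ₗ[ZMod 2] M Q :=
  Finsupp.linearCombination (ZMod 2) (mrg v g)

@[simp] lemma Act_e (n : ℕ) (v : V) (g : Q v) (l : List (Ltr Q)) :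
    Act Γ n v g (e l) = actF Γ n v g l := by
  simp [Act, e, Finsupp.linearCombination_single]

@[simp] lemma Mrg_e (v : V) (g : Q v) (l : List (Ltr Q)) :
    Mrg v g (e l) = mrg v g l := by
  simp [Mrg, e, Finsupp.linearCombination_single]


lemma mrg_cons_eq (v : V) (g z : Q v) (t : List (Ltr Q)) :
    mrg v g (⟨v, z⟩ :: t) = (CE ⟨v, g * z⟩ + CE ⟨v, g⟩ + CE ⟨v, z⟩) (e t) := by
  simp only [mrg, dif_pos]

lemma mrg_cons_ne (v : V) (g : Q v) (x : Ltr Q) (h : x.1 ≠ v) (t : List (Ltr Q)) :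
    mrg v g (x :: t) = Cm x (mrg v g t) := by
  obtain ⟨u, a⟩ := x
  simp only [mrg]
  rw [dif_neg h]

open Classical in
lemma CE_e (x : Ltr Q) (l : List (Ltr Q)) :
    CE x (e l) = if x.2 = 1 then 0 else e (x :: l) := by
  by_cases h : x.2 = 1
  · simp [CE_triv h, h]
  · simp [CE_nontriv h, h]

/-- Any image of a linear map taking basis vectors into `K` lies in `K`. -/
lemma mem_of_basis {K : Submodule (ZMod 2) (M Q)} {D : M Q →ₗ[ZMod 2] M Q}
    (h : ∀ l, D (e l) ∈ K) (m : M Q) : D m ∈ K := by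
  induction m using Finsupp.induction with
  | zero => simp
  | single_add l c f _ _ ih =>
    rw [map_add]
    refine Submodule.add_mem _ ?_ ih
    have : (Finsupp.single l c : M Q) = c • e l := by
      simp [e, Finsupp.smul_single]
    rw [this, map_smul]
    exact Submodule.smul_mem _ _ (h l)

/-- A vector supported on `S` lies in the span of the basis vectors of `S`. -/
lemma mem_span_e {S : Set (List (Ltr Q))} (m : M Q) (h : ∀ l ∈ m.support, l ∈ S) :
    m ∈ Submodule.span (ZMod 2) (e '' S) := by
  rw [← Finsupp.sum_single m]
  refine Submodule.sum_mem _ (fun l hl => ?_)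
  have : (Finsupp.single l (m l) : M Q) = (m l) • e l := by
    simp [e, Finsupp.smul_single]
  rw [this]
  exact Submodule.smul_mem _ _ (Submodule.subset_span ⟨l, h l hl, rfl⟩)

lemma mrg_one (v : V) : ∀ l : List (Ltr Q), mrg v (1 : Q v) l = 0
  | [] => by simp [mrg]
  | ⟨u, a⟩ :: t => by
    by_cases h : u = v
    · subst h
      rw [mrg_cons_eq]
      simp only [LinearMap.add_apply, one_mul]
      rw [CE_triv (show ((⟨u, (1 : Q u)⟩ : Ltr Q)).2 = 1 from rfl)]
      simp [Msum]
    · rw [mrg_cons_ne _ _ _ h, mrg_one v t, map_zero]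

lemma Pd_one (n : ℕ) (v : V) (l : List (Ltr Q)) : Pd n v (1 : Q v) l = 0 := by
  rw [Pd, CE_triv (show ((⟨v, (1 : Q v)⟩ : Ltr Q)).2 = 1 from rfl)]
  simp

lemma actF_one (n : ℕ) (v : V) (l : List (Ltr Q)) : actF Γ n v (1 : Q v) l = 0 := by
  rw [actF]
  split
  · exact mrg_one v l
  · exact Pd_one n v l

lemma Act_one (n : ℕ) (v : V) : Act Γ n v (1 : Q v) = 0 := by
  refine Finsupp.lhom_ext (fun l c => ?_)
  have : (Finsupp.single l c : M Q) = c • e l := by simp [e, Finsupp.smul_single]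
  simp [this, actF_one]

/-- `Mrg` commutes with cons by a letter at a different vertex. -/
lemma Mrg_comp_Cm {v : V} (g : Q v) (x : Ltr Q) (h : x.1 ≠ v) (m : M Q) :
    Mrg v g (Cm x m) = Cm x (Mrg v g m) := by
  induction m using Finsupp.induction with
  | zero => simp
  | single_add l c f _ _ ih =>
    have hs : (Finsupp.single l c : M Q) = c • e l := by simp [e, Finsupp.smul_single]
    simp only [hs, map_add, map_smul, ih]
    congr 1
    rw [Cm_e, Mrg_e, Mrg_e, mrg_cons_ne _ _ _ h]

lemma Mrg_comp_Cm_eq {v : V} (g z : Q v) (m : M Q) :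
    Mrg v g (Cm ⟨v, z⟩ m) = (CE ⟨v, g * z⟩ + CE ⟨v, g⟩ + CE ⟨v, z⟩) m := by
  induction m using Finsupp.induction with
  | zero => simp
  | single_add l c f _ _ ih =>
    have hs : (Finsupp.single l c : M Q) = c • e l := by simp [e, Finsupp.smul_single]
    simp only [hs, map_add, map_smul, ih]
    congr 1
    rw [Cm_e, Mrg_e, mrg_cons_eq]

lemma Mrg_comp_CE {v : V} (g z : Q v) (m : M Q) :
    Mrg v g (CE ⟨v, z⟩ m) = (CE ⟨v, g * z⟩ + CE ⟨v, g⟩ + CE ⟨v, z⟩) m := by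
  by_cases h : z = 1
  · subst h
    rw [CE_triv (show ((⟨v, (1 : Q v)⟩ : Ltr Q)).2 = 1 from rfl)]
    simp only [LinearMap.zero_apply, map_zero, mul_one, LinearMap.add_apply]
    rw [add_zero, Msum]
  · conv_lhs => rw [CE_nontriv h]
    rw [Mrg_comp_Cm_eq]


@[simp] lemma ebar_def' : True := trivial

@[simp] lemma Msmul2 (m : M Q) : (2 : ℕ) • m = 0 := by
  rw [two_smul]; exact Msum m

@[simp] lemma Msmul3 (m : M Q) : (3 : ℕ) • m = m := by
  have : (3 : ℕ) • m = (2 : ℕ) • m + m := by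
    rw [show (3 : ℕ) = 2 + 1 from rfl, add_nsmul, one_nsmul]
  rw [this, Msmul2, zero_add]

@[simp] lemma Msmul2Z (m : M Q) : (2 : ℤ) • m = 0 := by
  rw [show ((2 : ℤ) • m) = m + m by rw [two_smul]]; exact Msum m

@[simp] lemma Msmul3Z (m : M Q) : (3 : ℤ) • m = m := by
  rw [show (3 : ℤ) = 2 + 1 from rfl, add_smul, one_smul, Msmul2Z, zero_add]

lemma actF_vis {n : ℕ} {v : V} {g : Q v} {l : List (Ltr Q)} (h : vis Γ v l) :
    actF Γ n v g l = mrg v g l := if_pos h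

lemma actF_nvis {n : ℕ} {v : V} {g : Q v} {l : List (Ltr Q)} (h : ¬ vis Γ v l) :
    actF Γ n v g l = Pd n v g l := if_neg h

lemma Cm_span {S : Set (List (Ltr Q))} {x : Ltr Q} {m : M Q}
    (h : m ∈ Submodule.span (ZMod 2) (e '' S)) :
    Cm x m ∈ Submodule.span (ZMod 2) (e '' ((x :: ·) '' S)) := by
  have := Submodule.mem_map_of_mem (f := Cm x) h
  rw [Submodule.map_span] at this
  refine Submodule.span_le.2 ?_ this
  rintro y ⟨z, ⟨t, ht, rfl⟩, rfl⟩
  exact Submodule.subset_span ⟨x :: t, ⟨t, ht, rfl⟩, (Cm_e x t).symm ▸ rfl⟩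

/-- `mrg` preserves the vertex sequence. -/
lemma mrg_span (v : V) (g : Q v) : ∀ l : List (Ltr Q),
    mrg v g l ∈ Submodule.span (ZMod 2)
      (e '' {t : List (Ltr Q) | t.map (·.1) = l.map (·.1)})
  | [] => by simp [mrg]
  | ⟨u, a⟩ :: t => by
    by_cases h : u = v
    · subst h
      rw [mrg_cons_eq]
      simp only [LinearMap.add_apply]
      have mem : ∀ z : Q u, CE ⟨u, z⟩ (e t) ∈ Submodule.span (ZMod 2)
          (e '' {t' : List (Ltr Q) | t'.map (·.1) = ((⟨u, a⟩ : Ltr Q) :: t).map (·.1)}) := by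
        intro z
        rw [CE_e]
        split
        · simp
        · exact Submodule.subset_span ⟨⟨u, z⟩ :: t, by simp, rfl⟩
      exact Submodule.add_mem _ (Submodule.add_mem _ (mem _) (mem _)) (mem _)
    · rw [mrg_cons_ne _ _ _ h]
      have := Cm_span (x := ⟨u, a⟩) (mrg_span v g t)
      refine Submodule.span_le.2 ?_ this
      rintro y ⟨z, ⟨t', ht', rfl⟩, rfl⟩
      exact Submodule.subset_span ⟨⟨u, a⟩ :: t', by simpa using ht', rfl⟩

lemma Act_eq_Mrg (n : ℕ) (v : V) (g : Q v) {m : M Q}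
    (h : m ∈ Submodule.span (ZMod 2) (e '' {t : List (Ltr Q) | vis Γ v t})) :
    Act Γ n v g m = Mrg v g m := by
  induction h using Submodule.span_induction with
  | mem x hx =>
    obtain ⟨t, ht, rfl⟩ := hx
    rw [Act_e, Mrg_e, actF_vis Γ ht]
  | zero => simp
  | add x y _ _ hx hy => rw [map_add, map_add, hx, hy]
  | smul c x _ hx => rw [map_smul, map_smul, hx]

lemma REL1_mrg (v : V) (g h : Q v) : ∀ l : List (Ltr Q), vis Γ v l →
    Mrg v g (mrg v h l) = mrg v (g * h) l + mrg v g l + mrg v h l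
  | [], hv => (hv.elim)
  | ⟨u, a⟩ :: t, hv => by
    by_cases hu : u = v
    · subst hu
      rw [mrg_cons_eq, mrg_cons_eq, mrg_cons_eq]
      simp only [LinearMap.add_apply, map_add]
      rw [Mrg_comp_CE, Mrg_comp_CE, Mrg_comp_CE]
      simp only [LinearMap.add_apply, mul_assoc, mul_one]
      abel_nf
      simp only [Msmul3, Msmul3Z]
    · have hv' : vis Γ v t := by
        rcases hv with h1 | h2
        · exact absurd h1 hu
        · exact h2.2
      rw [mrg_cons_ne v (g * h) ⟨u, a⟩ hu t, mrg_cons_ne v g ⟨u, a⟩ hu t,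
        mrg_cons_ne v h ⟨u, a⟩ hu t, Mrg_comp_Cm g ⟨u, a⟩ hu, REL1_mrg v g h t hv',
        map_add, map_add]

lemma vis_of_vseq {v : V} {l t : List (Ltr Q)} (h : t.map (·.1) = l.map (·.1))
    (hv : vis Γ v l) : vis Γ v t := (vis_congr Γ h).2 hv

lemma REL1 (n : ℕ) (v : V) (g h : Q v) :
    (Act Γ n v g) ∘ₗ (Act Γ n v h) = Act Γ n v (g * h) + Act Γ n v g + Act Γ n v h := by
  refine Finsupp.lhom_ext (fun l c => ?_)
  have hs : (Finsupp.single l c : M Q) = c • e l := by simp [e, Finsupp.smul_single]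
  simp only [hs, map_smul, LinearMap.comp_apply, LinearMap.add_apply]
  congr 1
  rw [Act_e, Act_e, Act_e]
  by_cases hv : vis Γ v l
  · rw [actF_vis Γ hv, actF_vis Γ hv, actF_vis Γ hv]
    have hsup := mrg_span v h l
    have hsub : {t : List (Ltr Q) | t.map (·.1) = l.map (·.1)} ⊆ {t | vis Γ v t} :=
      fun t ht => vis_of_vseq Γ ht hv
    have : Act Γ n v g (mrg v h l) = Mrg v g (mrg v h l) :=
      Act_eq_Mrg Γ n v g (Submodule.span_mono (Set.image_mono hsub) hsup)
    rw [this, REL1_mrg Γ v g h l hv]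
  · rw [actF_nvis Γ hv, actF_nvis Γ hv, actF_nvis Γ hv]
    simp only [Pd]
    by_cases hlen : l.length + 1 ≤ n
    · rw [if_pos hlen]
      by_cases h1 : h = 1
      · subst h1
        rw [CE_triv (show ((⟨v, (1 : Q v)⟩ : Ltr Q)).2 = 1 from rfl)]
        simp only [LinearMap.zero_apply, map_zero, mul_one, if_pos hlen]
        rw [add_zero, Msum]
      · rw [CE_nontriv h1, Cm_e, Act_e,
          actF_vis Γ (show vis Γ v ((⟨v, h⟩ : Ltr Q) :: l) from Or.inl rfl), mrg_cons_eq]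
        simp only [LinearMap.add_apply, if_pos hlen]
        rw [CE_nontriv (show ((⟨v, h⟩ : Ltr Q)).2 ≠ 1 from h1), Cm_e]
    · rw [if_neg hlen]
      simp only [map_zero, if_neg hlen, add_zero, zero_add]


variable (Q) in
/-- Generators of the submodule we quotient by: swap relations (char 2: differences are
sums), words with a trivial letter, and words that are too long. -/
def Kgen (n : ℕ) : Set (M Q) :=
  {m | (∃ (a b : List (Ltr Q)) (x y : Ltr Q), Γ.Adj x.1 y.1 ∧
          m = e (a ++ x :: y :: b) + e (a ++ y :: x :: b))
     ∨ (∃ (l : List (Ltr Q)) (x : Ltr Q), x ∈ l ∧ x.2 = 1 ∧ m = e l)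
     ∨ (∃ l : List (Ltr Q), n < l.length ∧ m = e l)}

variable (Q) in
noncomputable def K (n : ℕ) : Submodule (ZMod 2) (M Q) := Submodule.span (ZMod 2) (Kgen Γ Q n)

variable {n : ℕ}

lemma KR {x y : Ltr Q} (h : Γ.Adj x.1 y.1) (a b : List (Ltr Q)) :
    e (a ++ x :: y :: b) + e (a ++ y :: x :: b) ∈ K Γ Q n :=
  Submodule.subset_span (Or.inl ⟨a, b, x, y, h, rfl⟩)

lemma KZ {l : List (Ltr Q)} {x : Ltr Q} (hx : x ∈ l) (h1 : x.2 = 1) : e l ∈ K Γ Q n :=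
  Submodule.subset_span (Or.inr (Or.inl ⟨l, x, hx, h1, rfl⟩))

lemma KT {l : List (Ltr Q)} (h : n < l.length) : e l ∈ K Γ Q n :=
  Submodule.subset_span (Or.inr (Or.inr ⟨l, h, rfl⟩))

lemma Cm_K (z : Ltr Q) {m : M Q} (hm : m ∈ K Γ Q n) : Cm z m ∈ K Γ Q n := by
  induction hm using Submodule.span_induction with
  | mem x hx =>
    rcases hx with ⟨a, b, x', y', hadj, rfl⟩ | ⟨l, x', hx', h1, rfl⟩ | ⟨l, hl, rfl⟩
    · rw [map_add, Cm_e, Cm_e]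
      exact KR Γ hadj (z :: a) b
    · rw [Cm_e]
      exact KZ Γ (List.mem_cons_of_mem z hx') h1
    · rw [Cm_e]
      exact KT Γ (by simpa using Nat.lt_succ_of_lt hl)
  | zero => simp
  | add x y _ _ hx hy => rw [map_add]; exact Submodule.add_mem _ hx hy
  | smul c x _ hx => rw [map_smul]; exact Submodule.smul_mem _ _ hx

lemma CE_K (z : Ltr Q) {m : M Q} (hm : m ∈ K Γ Q n) : CE z m ∈ K Γ Q n := by
  by_cases h : z.2 = 1
  · rw [CE_triv h]; simp
  · rw [CE_nontriv h]; exact Cm_K Γ z hm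

lemma CmTriv_K {z : Ltr Q} (h1 : z.2 = 1) (m : M Q) : Cm z m ∈ K Γ Q n := by
  refine mem_of_basis (fun l => ?_) m
  rw [Cm_e]
  exact KZ Γ (List.mem_cons_self) h1

lemma CmCm_K {x y : Ltr Q} (hadj : Γ.Adj x.1 y.1) (m : M Q) :
    Cm x (Cm y m) + Cm y (Cm x m) ∈ K Γ Q n := by
  have := mem_of_basis (K := K Γ Q n)
    (D := (Cm x) ∘ₗ (Cm y) + (Cm y) ∘ₗ (Cm x)) (fun l => by
      simp only [LinearMap.add_apply, LinearMap.comp_apply, Cm_e]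
      exact KR Γ hadj [] l) m
  simpa using this

lemma vis_swap {v : V} {x y : Ltr Q} (hadj : Γ.Adj x.1 y.1) (b : List (Ltr Q)) :
    ∀ a : List (Ltr Q), vis Γ v (a ++ x :: y :: b) ↔ vis Γ v (a ++ y :: x :: b)
  | [] => by
    show (x.1 = v ∨ _) ↔ (y.1 = v ∨ _)
    constructor
    · rintro (h | ⟨ha, h | ⟨hb, hv⟩⟩)
      · exact Or.inr ⟨by rw [← h]; exact hadj, Or.inl h⟩
      · exact Or.inl h
      · exact Or.inr ⟨hb, Or.inr ⟨ha, hv⟩⟩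
    · rintro (h | ⟨ha, h | ⟨hb, hv⟩⟩)
      · exact Or.inr ⟨by rw [← h]; exact hadj.symm, Or.inl h⟩
      · exact Or.inl h
      · exact Or.inr ⟨hb, Or.inr ⟨ha, hv⟩⟩
  | z :: a => by
    rw [List.cons_append, List.cons_append]
    show (z.1 = v ∨ _) ↔ (z.1 = v ∨ _)
    rw [vis_swap hadj b a]

lemma pairK {v : V} (z : Q v) {y : Ltr Q} (hadj : Γ.Adj v y.1) (b : List (Ltr Q)) :
    (CE ⟨v, z⟩) (e (y :: b)) + Cm y ((CE ⟨v, z⟩) (e b)) ∈ K Γ Q n := by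
  by_cases h : z = 1
  · rw [CE_triv (show ((⟨v, z⟩ : Ltr Q)).2 = 1 from h)]
    simp
  · rw [CE_nontriv (show ((⟨v, z⟩ : Ltr Q)).2 ≠ 1 from h), Cm_e, Cm_e, Cm_e]
    exact KR Γ (show Γ.Adj ((⟨v, z⟩ : Ltr Q)).1 y.1 from hadj) [] b

lemma pair2K {v : V} (w : Q v) {x y : Ltr Q} (hadj : Γ.Adj x.1 y.1)
    (a b : List (Ltr Q)) :
    (CE ⟨v, w⟩) (e (a ++ x :: y :: b)) + (CE ⟨v, w⟩) (e (a ++ y :: x :: b)) ∈ K Γ Q n := by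
  by_cases h : w = 1
  · rw [CE_triv (show ((⟨v, w⟩ : Ltr Q)).2 = 1 from h)]
    simp
  · rw [CE_nontriv (show ((⟨v, w⟩ : Ltr Q)).2 ≠ 1 from h), Cm_e, Cm_e]
    exact KR Γ hadj (⟨v, w⟩ :: a) b

lemma mrg_swap {v : V} (g : Q v) {x y : Ltr Q} (hadj : Γ.Adj x.1 y.1) (b : List (Ltr Q)) :
    ∀ a : List (Ltr Q),
      mrg v g (a ++ x :: y :: b) + mrg v g (a ++ y :: x :: b) ∈ K Γ Q n
  | [] => by
    obtain ⟨x1, x2⟩ := x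
    obtain ⟨y1, y2⟩ := y
    by_cases hx : x1 = v
    · subst hx
      have hy : y1 ≠ x1 := fun h => hadj.ne h.symm
      rw [List.nil_append, List.nil_append, mrg_cons_eq,
        mrg_cons_ne x1 g ⟨y1, y2⟩ hy, mrg_cons_eq]
      simp only [LinearMap.add_apply, map_add]
      have p1 := pairK (n := n) Γ (g * x2) (show Γ.Adj x1 ((⟨y1, y2⟩ : Ltr Q)).1 from hadj) b
      have p2 := pairK (n := n) Γ g (show Γ.Adj x1 ((⟨y1, y2⟩ : Ltr Q)).1 from hadj) b
      have p3 := pairK (n := n) Γ x2 (show Γ.Adj x1 ((⟨y1, y2⟩ : Ltr Q)).1 from hadj) b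
      have := Submodule.add_mem _ (Submodule.add_mem _ p1 p2) p3
      convert this using 1
      abel
    · by_cases hy : y1 = v
      · subst hy
        have hx' : x1 ≠ y1 := hadj.ne
        rw [List.nil_append, List.nil_append, mrg_cons_ne y1 g ⟨x1, x2⟩ hx, mrg_cons_eq,
          mrg_cons_eq]
        simp only [LinearMap.add_apply, map_add]
        have p1 := pairK (n := n) Γ (g * y2) (show Γ.Adj y1 ((⟨x1, x2⟩ : Ltr Q)).1 from hadj.symm) b
        have p2 := pairK (n := n) Γ g (show Γ.Adj y1 ((⟨x1, x2⟩ : Ltr Q)).1 from hadj.symm) b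
        have p3 := pairK (n := n) Γ y2 (show Γ.Adj y1 ((⟨x1, x2⟩ : Ltr Q)).1 from hadj.symm) b
        have := Submodule.add_mem _ (Submodule.add_mem _ p1 p2) p3
        convert this using 1
        abel
      · rw [List.nil_append, List.nil_append, mrg_cons_ne v g ⟨x1, x2⟩ hx,
          mrg_cons_ne v g ⟨y1, y2⟩ hy, mrg_cons_ne v g ⟨y1, y2⟩ hy,
          mrg_cons_ne v g ⟨x1, x2⟩ hx]
        exact CmCm_K Γ hadj (mrg v g b)
  | z :: a => by
    obtain ⟨z1, z2⟩ := z
    by_cases hz : z1 = v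
    · subst hz
      rw [List.cons_append, List.cons_append, mrg_cons_eq, mrg_cons_eq]
      simp only [LinearMap.add_apply]
      have p1 := pair2K (n := n) Γ (g * z2) hadj a b
      have p2 := pair2K (n := n) Γ g hadj a b
      have p3 := pair2K (n := n) Γ z2 hadj a b
      have := Submodule.add_mem _ (Submodule.add_mem _ p1 p2) p3
      convert this using 1
      abel
    · rw [List.cons_append, List.cons_append, mrg_cons_ne v g ⟨z1, z2⟩ hz,
        mrg_cons_ne v g ⟨z1, z2⟩ hz, ← map_add]
      exact Cm_K Γ _ (mrg_swap g hadj b a)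


lemma span_le_K {S : Set (List (Ltr Q))} (h : ∀ t ∈ S, e t ∈ K Γ Q n) {m : M Q}
    (hm : m ∈ Submodule.span (ZMod 2) (e '' S)) : m ∈ K Γ Q n := by
  refine Submodule.span_le.2 ?_ hm
  rintro y ⟨t, ht, rfl⟩
  exact h t ht

lemma mrg_K_long {v : V} (g : Q v) {l : List (Ltr Q)} (hl : n < l.length) :
    mrg v g l ∈ K Γ Q n := by
  refine span_le_K Γ (fun t ht => ?_) (mrg_span v g l)
  refine KT Γ ?_
  have : t.length = l.length := by
    have := congrArg List.length ht
    simpa using this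
  omega

lemma mrg_K_triv {v : V} (g : Q v) {x0 : Ltr Q} (h1 : x0.2 = 1) :
    ∀ l : List (Ltr Q), x0 ∈ l → mrg v g l ∈ K Γ Q n
  | [], hx => by simp at hx
  | ⟨u, a⟩ :: t, hx => by
    by_cases hu : u = v
    · subst hu
      rw [mrg_cons_eq]
      rcases List.mem_cons.1 hx with rfl | hxt
      · have : a = 1 := h1
        subst this
        simp only [LinearMap.add_apply, mul_one]
        rw [CE_triv (show ((⟨u, (1 : Q u)⟩ : Ltr Q)).2 = 1 from rfl)]
        rw [LinearMap.zero_apply, add_zero, Msum]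
        simp
      · simp only [LinearMap.add_apply]
        refine Submodule.add_mem _ (Submodule.add_mem _ ?_ ?_) ?_ <;>
          exact CE_K Γ _ (KZ Γ hxt h1)
    · rw [mrg_cons_ne v g ⟨u, a⟩ hu]
      rcases List.mem_cons.1 hx with rfl | hxt
      · exact CmTriv_K Γ h1 _
      · exact Cm_K Γ _ (mrg_K_triv g h1 t hxt)

lemma Pd_K {v : V} (g : Q v) {l : List (Ltr Q)} (h : e l ∈ K Γ Q n) :
    Pd n v g l ∈ K Γ Q n := by
  rw [Pd]
  split
  · exact CE_K Γ _ h
  · simp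

lemma Act_K {v : V} (g : Q v) {m : M Q} (hm : m ∈ K Γ Q n) :
    Act Γ n v g m ∈ K Γ Q n := by
  induction hm using Submodule.span_induction with
  | mem x hx =>
    rcases hx with ⟨a, b, x', y', hadj, rfl⟩ | ⟨l, x', hx', h1, rfl⟩ | ⟨l, hl, rfl⟩
    · rw [map_add, Act_e, Act_e]
      by_cases hv : vis Γ v (a ++ x' :: y' :: b)
      · rw [actF_vis Γ hv, actF_vis Γ ((vis_swap Γ hadj b a).1 hv)]
        exact mrg_swap Γ g hadj b a
      · rw [actF_nvis Γ hv, actF_nvis Γ (fun hv2 => hv ((vis_swap Γ hadj b a).2 hv2))]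
        rw [Pd, Pd]
        have hlen : (a ++ x' :: y' :: b).length = (a ++ y' :: x' :: b).length := by simp
        by_cases hl : (a ++ x' :: y' :: b).length + 1 ≤ n
        · rw [if_pos hl, if_pos (hlen ▸ hl)]
          exact pair2K Γ g hadj a b
        · rw [if_neg hl, if_neg (hlen ▸ hl)]
          simp
    · rw [Act_e]
      by_cases hv : vis Γ v l
      · rw [actF_vis Γ hv]
        exact mrg_K_triv Γ g h1 l hx'
      · rw [actF_nvis Γ hv]
        exact Pd_K Γ g (KZ Γ hx' h1)
    · rw [Act_e]
      by_cases hv : vis Γ v l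
      · rw [actF_vis Γ hv]
        exact mrg_K_long Γ g hl
      · rw [actF_nvis Γ hv]
        exact Pd_K Γ g (KT Γ hl)
  | zero => simp
  | add x y _ _ hx hy => rw [map_add]; exact Submodule.add_mem _ hx hy
  | smul c x _ hx => rw [map_smul]; exact Submodule.smul_mem _ _ hx

lemma Mrg_comp_CE_ne {v : V} (g : Q v) (x : Ltr Q) (h : x.1 ≠ v) (m : M Q) :
    Mrg v g (CE x m) = CE x (Mrg v g m) := by
  by_cases h1 : x.2 = 1
  · rw [CE_triv h1]; simp
  · rw [CE_nontriv h1, Mrg_comp_Cm g x h]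

lemma mrgComm {u v : V} (g : Q u) (h : Q v) (huv : u ≠ v) :
    ∀ l : List (Ltr Q), Mrg u g (mrg v h l) = Mrg v h (mrg u g l)
  | [] => by simp [mrg]
  | ⟨w, a⟩ :: t => by
    by_cases hw : w = u
    · subst hw
      rw [mrg_cons_ne v h ⟨w, a⟩ huv, mrg_cons_eq, Mrg_comp_Cm_eq]
      simp only [LinearMap.add_apply, map_add]
      rw [Mrg_comp_CE_ne h ⟨w, g * a⟩ huv, Mrg_comp_CE_ne h ⟨w, g⟩ huv,
        Mrg_comp_CE_ne h ⟨w, a⟩ huv, Mrg_e]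
    · by_cases hw' : w = v
      · subst hw'
        rw [mrg_cons_ne u g ⟨w, a⟩ hw, mrg_cons_eq, Mrg_comp_Cm_eq]
        simp only [LinearMap.add_apply, map_add]
        rw [Mrg_comp_CE_ne g ⟨w, h * a⟩ (fun hh => huv hh.symm),
          Mrg_comp_CE_ne g ⟨w, h⟩ (fun hh => huv hh.symm),
          Mrg_comp_CE_ne g ⟨w, a⟩ (fun hh => huv hh.symm), Mrg_e]
      · rw [mrg_cons_ne u g ⟨w, a⟩ hw, mrg_cons_ne v h ⟨w, a⟩ hw',
          Mrg_comp_Cm g ⟨w, a⟩ hw, Mrg_comp_Cm h ⟨w, a⟩ hw',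
          mrgComm g h huv t]

lemma Act_nvis_span {v : V} (h : Q v) {l : List (Ltr Q)} (hv : ¬ vis Γ v l) {m : M Q}
    (hm : m ∈ Submodule.span (ZMod 2) (e '' {t : List (Ltr Q) | t.map (·.1) = l.map (·.1)})) :
    Act Γ n v h m = if l.length + 1 ≤ n then CE ⟨v, h⟩ m else 0 := by
  induction hm using Submodule.span_induction with
  | mem x hx =>
    obtain ⟨t, ht, rfl⟩ := hx
    have hlen : t.length = l.length := by
      have := congrArg List.length ht
      simpa using this
    have hnv : ¬ vis Γ v t := fun hv2 => hv ((vis_congr Γ ht).1 hv2)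
    rw [Act_e, actF_nvis Γ hnv, Pd, hlen]
  | zero => simp only [map_zero]; split <;> simp
  | add x y _ _ hx hy =>
    rw [map_add, hx, hy]
    split <;> simp [map_add]
  | smul c x _ hx =>
    rw [map_smul, hx]
    split <;> simp

lemma Act_mrg_eq_Mrg {u v : V} (g : Q u) (h : Q v) {l : List (Ltr Q)} (hu : vis Γ u l) :
    Act Γ n u g (mrg v h l) = Mrg u g (mrg v h l) := by
  refine Act_eq_Mrg Γ n u g ?_
  refine Submodule.span_mono (Set.image_mono ?_) (mrg_span v h l)
  exact fun t ht => vis_of_vseq Γ ht hu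

lemma REL2aux {u v : V} (g : Q u) (h : Q v) (hadj : Γ.Adj u v) (l : List (Ltr Q))
    (hvu : vis Γ u l) (hvv : ¬ vis Γ v l) :
    Act Γ n u g (Act Γ n v h (e l)) + Act Γ n v h (Act Γ n u g (e l)) ∈ K Γ Q n := by
  rw [Act_e, Act_e, actF_nvis Γ hvv, actF_vis Γ hvu, Pd,
    Act_nvis_span Γ h hvv (mrg_span u g l)]
  by_cases hlen : l.length + 1 ≤ n
  · rw [if_pos hlen, if_pos hlen]
    by_cases h1 : h = 1
    · subst h1
      rw [CE_triv (show ((⟨v, (1 : Q v)⟩ : Ltr Q)).2 = 1 from rfl)]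
      simp
    · rw [CE_nontriv (show ((⟨v, h⟩ : Ltr Q)).2 ≠ 1 from h1), Cm_e, Act_e,
        actF_vis Γ (show vis Γ u ((⟨v, h⟩ : Ltr Q) :: l) from Or.inr ⟨hadj, hvu⟩),
        mrg_cons_ne u g ⟨v, h⟩ (fun hh => hadj.ne hh.symm), Msum]
      simp
  · rw [if_neg hlen, if_neg hlen]
    simp

lemma REL2 {u v : V} (g : Q u) (h : Q v) (hadj : Γ.Adj u v) (m : M Q) :
    Act Γ n u g (Act Γ n v h m) + Act Γ n v h (Act Γ n u g m) ∈ K Γ Q n := by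
  have := mem_of_basis (K := K Γ Q n)
    (D := (Act Γ n u g) ∘ₗ (Act Γ n v h) + (Act Γ n v h) ∘ₗ (Act Γ n u g)) (fun l => by
      simp only [LinearMap.add_apply, LinearMap.comp_apply]
      by_cases hvu : vis Γ u l <;> by_cases hvv : vis Γ v l
      · -- both visible
        rw [Act_e, Act_e, actF_vis Γ hvv, actF_vis Γ hvu,
          Act_mrg_eq_Mrg Γ g h hvu, Act_mrg_eq_Mrg Γ h g hvv,
          mrgComm g h hadj.ne l, Msum]
        simp
      · exact REL2aux Γ g h hadj l hvu hvv
      · rw [add_comm]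
        exact REL2aux Γ h g hadj.symm l hvv hvu
      · -- neither visible
        rw [Act_e, Act_e, actF_nvis Γ hvv, actF_nvis Γ hvu, Pd, Pd]
        by_cases hlen : l.length + 1 ≤ n
        · rw [if_pos hlen, if_pos hlen]
          by_cases h1 : h = 1
          · subst h1
            rw [CE_triv (show ((⟨v, (1 : Q v)⟩ : Ltr Q)).2 = 1 from rfl), Act_one]
            simp
          · by_cases g1 : g = 1
            · subst g1
              rw [CE_triv (show ((⟨u, (1 : Q u)⟩ : Ltr Q)).2 = 1 from rfl), Act_one]
              simp
            · rw [CE_nontriv (show ((⟨v, h⟩ : Ltr Q)).2 ≠ 1 from h1),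
                CE_nontriv (show ((⟨u, g⟩ : Ltr Q)).2 ≠ 1 from g1), Cm_e, Cm_e,
                Act_e, Act_e,
                actF_nvis Γ (show ¬ vis Γ u ((⟨v, h⟩ : Ltr Q) :: l) from by
                  rintro (hh | ⟨_, hh⟩)
                  · exact hadj.ne hh.symm
                  · exact hvu hh),
                actF_nvis Γ (show ¬ vis Γ v ((⟨u, g⟩ : Ltr Q) :: l) from by
                  rintro (hh | ⟨_, hh⟩)
                  · exact hadj.ne hh
                  · exact hvv hh),
                Pd, Pd]
              simp only [List.length_cons]
              by_cases hlen2 : l.length + 1 + 1 ≤ n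
              · rw [if_pos hlen2, if_pos hlen2,
                  CE_nontriv (show ((⟨u, g⟩ : Ltr Q)).2 ≠ 1 from g1),
                  CE_nontriv (show ((⟨v, h⟩ : Ltr Q)).2 ≠ 1 from h1), Cm_e, Cm_e]
                exact KR Γ (show Γ.Adj ((⟨u, g⟩ : Ltr Q)).1 ((⟨v, h⟩ : Ltr Q)).1 from hadj) [] l
              · rw [if_neg hlen2, if_neg hlen2]
                simp
        · rw [if_neg hlen, if_neg hlen]
          simp) m
  simpa using this


/-- char-2 cancellation in any `ZMod 2`-module -/
lemma msum {A : Type*} [AddCommGroup A] [Module (ZMod 2) A] (a : A) : a + a = 0 := by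
  have h2 : ((2 : ZMod 2)) = 0 := by decide
  calc a + a = (2 : ZMod 2) • a := by
        rw [show ((2 : ZMod 2)) = ((1 : ZMod 2) + 1) by decide, add_smul, one_smul]
  _ = 0 := by rw [h2, zero_smul]

lemma mneg {A : Type*} [AddCommGroup A] [Module (ZMod 2) A] (a : A) : -a = a :=
  neg_eq_of_add_eq_zero_left (msum a)

variable (Q) in
/-- The truncated quotient module. -/
abbrev Nn (n : ℕ) := M Q ⧸ K Γ Q n

noncomputable def ActQ (n : ℕ) (v : V) (g : Q v) : Nn Γ Q n →ₗ[ZMod 2] Nn Γ Q n :=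
  Submodule.mapQ _ _ (Act Γ n v g) (fun _ hm => Act_K Γ g hm)

lemma ActQ_mk (n : ℕ) (v : V) (g : Q v) (m : M Q) :
    ActQ Γ n v g (Submodule.Quotient.mk m) = Submodule.Quotient.mk (Act Γ n v g m) :=
  Submodule.mapQ_apply _ _ _ _

lemma ActQ_one (n : ℕ) (v : V) : ActQ Γ n v (1 : Q v) = 0 := by
  refine Submodule.linearMap_qext _ (LinearMap.ext fun m => ?_)
  simp only [LinearMap.comp_apply, Submodule.mkQ_apply, ActQ_mk, Act_one]
  simp

lemma REL1Q (n : ℕ) (v : V) (g h : Q v) :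
    (ActQ Γ n v g) ∘ₗ (ActQ Γ n v h) = ActQ Γ n v (g * h) + ActQ Γ n v g + ActQ Γ n v h := by
  refine Submodule.linearMap_qext _ (LinearMap.ext fun m => ?_)
  simp only [LinearMap.comp_apply, Submodule.mkQ_apply, ActQ_mk, LinearMap.add_apply]
  have hx : (Act Γ n v g) ((Act Γ n v h) m) =
      (Act Γ n v (g * h)) m + (Act Γ n v g) m + (Act Γ n v h) m := by
    have := congrArg (fun (f : M Q →ₗ[ZMod 2] M Q) => f m) (REL1 Γ n v g h)
    simpa using this
  rw [hx]
  simp [Submodule.Quotient.mk_add]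

lemma REL2Q {u v : V} (n : ℕ) (g : Q u) (h : Q v) (hadj : Γ.Adj u v) :
    (ActQ Γ n u g) ∘ₗ (ActQ Γ n v h) = (ActQ Γ n v h) ∘ₗ (ActQ Γ n u g) := by
  refine Submodule.linearMap_qext _ (LinearMap.ext fun m => ?_)
  simp only [LinearMap.comp_apply, Submodule.mkQ_apply, ActQ_mk]
  rw [Submodule.Quotient.eq, sub_eq_add_neg, mneg]
  exact REL2 Γ g h hadj m

/-- the monoid homomorphism `g ↦ 1 + (action of g)` into the endomorphism ring. -/
noncomputable def Theta (n : ℕ) (v : V) : Q v →* Module.End (ZMod 2) (Nn Γ Q n) where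
  toFun g := 1 + ActQ Γ n v g
  map_one' := by show 1 + ActQ Γ n v 1 = 1; rw [ActQ_one, add_zero]
  map_mul' g h := by
    have hc : (ActQ Γ n v g) * (ActQ Γ n v h) =
        ActQ Γ n v (g * h) + ActQ Γ n v g + ActQ Γ n v h := by
      rw [Module.End.mul_eq_comp, REL1Q]
    show 1 + ActQ Γ n v (g * h) = (1 + ActQ Γ n v g) * (1 + ActQ Γ n v h)
    have expand : (1 + ActQ Γ n v g) * (1 + ActQ Γ n v h) =
        1 + ActQ Γ n v g + ActQ Γ n v h + (ActQ Γ n v g) * (ActQ Γ n v h) := by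
      noncomm_ring
    rw [expand, hc]
    have h2 : ActQ Γ n v g + ActQ Γ n v g = 0 := msum _
    have h3 : ActQ Γ n v h + ActQ Γ n v h = 0 := msum _
    have hr : 1 + ActQ Γ n v g + ActQ Γ n v h +
          (ActQ Γ n v (g * h) + ActQ Γ n v g + ActQ Γ n v h) =
        1 + ActQ Γ n v (g * h) +
          ((ActQ Γ n v g + ActQ Γ n v g) + (ActQ Γ n v h + ActQ Γ n v h)) := by
      abel
    rw [hr, h2, h3, add_zero, add_zero]

noncomputable def ThetaU (n : ℕ) (v : V) :
    Q v →* (Module.End (ZMod 2) (Nn Γ Q n))ˣ :=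
  (Theta Γ n v).toHomUnits

lemma ThetaU_commute {u v : V} (n : ℕ) (hadj : Γ.Adj u v) (g : Q u) (h : Q v) :
    Commute (ThetaU Γ n u g) (ThetaU Γ n v h) := by
  have : Commute ((ThetaU Γ n u g : (Module.End (ZMod 2) (Nn Γ Q n))ˣ) : Module.End (ZMod 2) (Nn Γ Q n))
      ((ThetaU Γ n v h : (Module.End (ZMod 2) (Nn Γ Q n))ˣ) : Module.End (ZMod 2) (Nn Γ Q n)) := by
    show Commute (1 + ActQ Γ n u g) (1 + ActQ Γ n v h)
    unfold Commute SemiconjBy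
    have hmul : (ActQ Γ n u g) * (ActQ Γ n v h) = (ActQ Γ n v h) * (ActQ Γ n u g) := by
      rw [Module.End.mul_eq_comp, Module.End.mul_eq_comp, REL2Q Γ n g h hadj]
    have e1 : (1 + ActQ Γ n u g) * (1 + ActQ Γ n v h) =
        1 + ActQ Γ n u g + ActQ Γ n v h + (ActQ Γ n u g) * (ActQ Γ n v h) := by
      noncomm_ring
    have e2 : (1 + ActQ Γ n v h) * (1 + ActQ Γ n u g) =
        1 + ActQ Γ n v h + ActQ Γ n u g + (ActQ Γ n v h) * (ActQ Γ n u g) := by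
      noncomm_ring
    rw [e1, e2, hmul]
    abel
  exact Units.ext this


section GroupSide

variable (Q) in
/-- projection to the graph product -/
noncomputable def gpmk : CoprodI Q →* GraphProduct Γ Q := QuotientGroup.mk' _

lemma gpmk_commute {u v : V} (hadj : Γ.Adj u v) (gu : Q u) (gv : Q v) :
    Commute (gpmk Γ Q (CoprodI.of gu)) (gpmk Γ Q (CoprodI.of gv)) := by
  rw [← commutatorElement_eq_one_iff_commute, ← map_commutatorElement]
  have : (⁅CoprodI.of gu, CoprodI.of gv⁆ : CoprodI Q) ∈ Subgroup.normalClosure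
      { x : CoprodI Q | ∃ (u v : V) (gu : Q u) (gv : Q v),
        Γ.Adj u v ∧ x = ⁅CoprodI.of gu, CoprodI.of gv⁆ } :=
    Subgroup.subset_normalClosure ⟨u, v, gu, gv, hadj, rfl⟩
  exact (QuotientGroup.eq_one_iff _).2 this

variable (Q) in
/-- the element of the free product given by a word -/
noncomputable def wrd (l : List (Ltr Q)) : CoprodI Q :=
  (l.map (fun x => CoprodI.of x.2)).prod

variable (Q) in
/-- the element of the graph product given by a word -/
noncomputable def gp (l : List (Ltr Q)) : GraphProduct Γ Q := gpmk Γ Q (wrd Q l)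

lemma wrd_nil : wrd Q [] = 1 := rfl

lemma wrd_cons (x : Ltr Q) (l : List (Ltr Q)) :
    wrd Q (x :: l) = CoprodI.of x.2 * wrd Q l := by
  simp [wrd]

lemma wrd_append (l1 l2 : List (Ltr Q)) : wrd Q (l1 ++ l2) = wrd Q l1 * wrd Q l2 := by
  simp [wrd]

lemma gp_nil : gp Γ Q [] = 1 := map_one _

lemma gp_cons (x : Ltr Q) (l : List (Ltr Q)) :
    gp Γ Q (x :: l) = gpmk Γ Q (CoprodI.of x.2) * gp Γ Q l := by
  rw [gp, wrd_cons, map_mul, gp]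

lemma gp_merge {v : V} : ∀ (t : List (Ltr Q)), vis Γ v t → ∀ g : Q v,
    ∃ t' : List (Ltr Q), t'.length < ((⟨v, g⟩ : Ltr Q) :: t).length ∧
      gp Γ Q t' = gp Γ Q ((⟨v, g⟩ : Ltr Q) :: t)
  | [], hv => hv.elim
  | ⟨u, a⟩ :: t, hv => fun g => by
    by_cases hu : u = v
    · subst hu
      refine ⟨⟨u, g * a⟩ :: t, by simp, ?_⟩
      rw [gp_cons, gp_cons, gp_cons, ← mul_assoc, ← map_mul, ← map_mul, map_mul]
    · have hv' : Γ.Adj v u ∧ vis Γ v t := by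
        rcases hv with h1 | h2
        · exact absurd h1 hu
        · exact h2
      obtain ⟨t', ht'len, ht'⟩ := gp_merge t hv'.2 g
      refine ⟨⟨u, a⟩ :: t', by simpa using ht'len, ?_⟩
      rw [gp_cons Γ ⟨u, a⟩ t', ht', gp_cons Γ ⟨v, g⟩ t, gp_cons Γ ⟨v, g⟩ (⟨u, a⟩ :: t),
        gp_cons Γ ⟨u, a⟩ t, ← mul_assoc, ← mul_assoc, (gpmk_commute Γ hv'.1 g a).eq]

lemma exists_red : ∀ (N : ℕ) (l : List (Ltr Q)), l.length ≤ N →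
    ∃ l', Red Γ l' ∧ l'.length ≤ l.length ∧ gp Γ Q l' = gp Γ Q l
  | 0, l, hl => by
    have : l = [] := List.length_eq_zero_iff.1 (Nat.le_zero.1 hl)
    subst this
    exact ⟨[], trivial, le_refl _, rfl⟩
  | (N + 1), [], _ => ⟨[], trivial, le_refl _, rfl⟩
  | (N + 1), x :: t, hl => by
    have ht : t.length ≤ N := by simpa using Nat.succ_le_succ_iff.1 hl
    obtain ⟨t', hred, hlen, hgp⟩ := exists_red N t ht
    by_cases hx1 : x.2 = 1
    · refine ⟨t', hred, by simpa using Nat.le_succ_of_le hlen, ?_⟩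
      rw [hgp, gp_cons]
      obtain ⟨xv, xg⟩ := x
      have : xg = 1 := hx1
      subst this
      simp
    · by_cases hvis : vis Γ x.1 t'
      · obtain ⟨t'', ht''len, ht''⟩ := gp_merge Γ t' hvis x.2
        have ht''N : t''.length ≤ N := by
          have h1 : t''.length < t'.length + 1 := by simpa using ht''len
          omega
        obtain ⟨l', hred', hlen', hgp'⟩ := exists_red N t'' ht''N
        refine ⟨l', hred', ?_, ?_⟩
        · have h1 : t''.length < t'.length + 1 := by simpa using ht''len
          simp only [List.length_cons]
          omega
        · rw [hgp', ht'']
          show gp Γ Q ((⟨x.1, x.2⟩ : Ltr Q) :: t') = gp Γ Q (x :: t)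
          rw [gp_cons, gp_cons, hgp]
      · refine ⟨x :: t', ⟨hx1, hvis, hred⟩, by simpa using hlen, ?_⟩
        rw [gp_cons, gp_cons, hgp]

lemma wrd_surj : ∀ y : CoprodI Q, ∃ l : List (Ltr Q), wrd Q l = y := by
  intro y
  induction y using CoprodI.induction_on with
  | one => exact ⟨[], rfl⟩
  | of i m => exact ⟨[⟨i, m⟩], by simp [wrd]⟩
  | mul x y hx hy =>
    obtain ⟨l1, rfl⟩ := hx
    obtain ⟨l2, rfl⟩ := hy
    exact ⟨l1 ++ l2, wrd_append l1 l2⟩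

lemma gp_surj (x : GraphProduct Γ Q) : ∃ l : List (Ltr Q), Red Γ l ∧ gp Γ Q l = x := by
  obtain ⟨y, rfl⟩ := QuotientGroup.mk'_surjective _ x
  obtain ⟨l, rfl⟩ := wrd_surj y
  obtain ⟨l', hred, _, hgp⟩ := exists_red Γ l.length l (le_refl _)
  exact ⟨l', hred, hgp⟩

end GroupSide

section Homo

variable (Q) in
noncomputable def Phi (n : ℕ) :
    GraphProduct Γ Q →* (Module.End (ZMod 2) (Nn Γ Q n))ˣ :=
  QuotientGroup.lift _ (CoprodI.lift (fun v => ThetaU Γ n v)) (by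
    refine Subgroup.normalClosure_le_normal ?_
    rintro x ⟨u, v, gu, gv, hadj, rfl⟩
    rw [SetLike.mem_coe, MonoidHom.mem_ker, map_commutatorElement,
      CoprodI.lift_of, CoprodI.lift_of, commutatorElement_eq_one_iff_commute]
    exact ThetaU_commute Γ n hadj gu gv)

lemma Phi_gp (n : ℕ) (l : List (Ltr Q)) :
    Phi Γ Q n (gp Γ Q l) = CoprodI.lift (fun v => ThetaU Γ n v) (wrd Q l) :=
  QuotientGroup.lift_mk' _ _ _

end Homo


section Eval

variable {n : ℕ}

variable (Q) in
noncomputable def ebar (n : ℕ) (l : List (Ltr Q)) : Nn Γ Q n :=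
  Submodule.Quotient.mk (e l)

variable (Q) in
noncomputable def Jlt (n d : ℕ) : Submodule (ZMod 2) (Nn Γ Q n) :=
  Submodule.span (ZMod 2) ((fun t => ebar Γ Q n t) '' {t : List (Ltr Q) | t.length < d})

lemma Jlt_mono {d d' : ℕ} (h : d ≤ d') : Jlt Γ Q n d ≤ Jlt Γ Q n d' :=
  Submodule.span_mono (Set.image_mono (fun t ht => lt_of_lt_of_le ht h))

lemma mk_span {S : Set (List (Ltr Q))} {m : M Q}
    (hm : m ∈ Submodule.span (ZMod 2) (e '' S)) :
    Submodule.Quotient.mk m ∈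
      Submodule.span (ZMod 2) ((fun t => ebar Γ Q n t) '' S) := by
  have := Submodule.mem_map_of_mem (f := (K Γ Q n).mkQ) hm
  rw [Submodule.map_span] at this
  refine Submodule.span_le.2 ?_ this
  rintro y ⟨z, ⟨t, ht, rfl⟩, rfl⟩
  exact Submodule.subset_span ⟨t, ht, rfl⟩

lemma actF_len (v : V) (g : Q v) (t : List (Ltr Q)) :
    actF Γ n v g t ∈ Submodule.span (ZMod 2)
      (e '' {t' : List (Ltr Q) | t'.length ≤ t.length + 1}) := by
  rw [actF]
  split
  · refine Submodule.span_mono (Set.image_mono ?_) (mrg_span v g t)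
    intro t' ht'
    have : t'.length = t.length := by
      have := congrArg List.length ht'
      simpa using this
    simp [this]
  · rw [Pd]
    split
    · rw [CE_e]
      split
      · simp
      · exact Submodule.subset_span ⟨⟨v, g⟩ :: t, by simp, rfl⟩
    · simp

lemma ActQ_Jlt {d : ℕ} (v : V) (g : Q v) {j : Nn Γ Q n} (hj : j ∈ Jlt Γ Q n d) :
    ActQ Γ n v g j ∈ Jlt Γ Q n (d + 1) := by
  induction hj using Submodule.span_induction with
  | mem x hx =>
    obtain ⟨t, ht, rfl⟩ := hx
    show ActQ Γ n v g (ebar Γ Q n t) ∈ Jlt Γ Q n (d + 1)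
    rw [show ebar Γ Q n t = Submodule.Quotient.mk (e t) from rfl, ActQ_mk, Act_e]
    refine Submodule.span_le.2 ?_ (mk_span Γ (actF_len Γ v g t))
    rintro y ⟨t', ht', rfl⟩
    refine Submodule.subset_span ⟨t', ?_, rfl⟩
    simp only [Set.mem_setOf_eq] at ht' ht ⊢
    omega
  | zero => simp
  | add x y _ _ hx hy => rw [map_add]; exact Submodule.add_mem _ hx hy
  | smul c x _ hx => rw [map_smul]; exact Submodule.smul_mem _ _ hx

lemma eval : ∀ l : List (Ltr Q), Red Γ l → l.length ≤ n →
    ∃ j ∈ Jlt Γ Q n l.length,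
      (((CoprodI.lift (fun v => ThetaU Γ n v)) (wrd Q l) :
          (Module.End (ZMod 2) (Nn Γ Q n))ˣ) : Module.End (ZMod 2) (Nn Γ Q n))
        (ebar Γ Q n []) = ebar Γ Q n l + j
  | [], _, _ => ⟨0, Submodule.zero_mem _, by
      rw [wrd_nil, map_one, Units.val_one, add_zero]
      rfl⟩
  | x :: t, hred, hlen => by
    obtain ⟨hx1, hnv, hredt⟩ := hred
    have hlent : t.length ≤ n := by
      simp only [List.length_cons] at hlen
      omega
    obtain ⟨j, hj, hval⟩ := eval t hredt hlent
    rw [wrd_cons, map_mul, Units.val_mul]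
    have happ : ∀ z : Nn Γ Q n,
        ((((CoprodI.lift (fun v => ThetaU Γ n v)) (CoprodI.of x.2) :
          (Module.End (ZMod 2) (Nn Γ Q n))ˣ) : Module.End (ZMod 2) (Nn Γ Q n))) z
          = z + ActQ Γ n x.1 x.2 z := by
      intro z
      rw [CoprodI.lift_of]
      show ((ThetaU Γ n x.1 x.2 : (Module.End (ZMod 2) (Nn Γ Q n))ˣ) :
        Module.End (ZMod 2) (Nn Γ Q n)) z = _
      rw [ThetaU, MonoidHom.coe_toHomUnits]
      show (1 + ActQ Γ n x.1 x.2) z = _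
      simp
    rw [Module.End.mul_apply, hval, happ]
    have hact : ActQ Γ n x.1 x.2 (ebar Γ Q n t) = ebar Γ Q n (x :: t) := by
      rw [show ebar Γ Q n t = Submodule.Quotient.mk (e t) from rfl, ActQ_mk, Act_e,
        actF_nvis Γ hnv, Pd,
        if_pos (show t.length + 1 ≤ n by simpa using hlen), CE_e, if_neg hx1]
      rfl
    refine ⟨ebar Γ Q n t + j + ActQ Γ n x.1 x.2 j, ?_, ?_⟩
    · have h1 : ebar Γ Q n t ∈ Jlt Γ Q n (x :: t).length :=
        Submodule.subset_span ⟨t, by simp, rfl⟩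
      have h2 : j ∈ Jlt Γ Q n (x :: t).length :=
        Jlt_mono Γ (by simp) hj
      have h3 : ActQ Γ n x.1 x.2 j ∈ Jlt Γ Q n (x :: t).length := by
        have := ActQ_Jlt Γ x.1 x.2 hj
        exact Jlt_mono Γ (by simp) this
      exact Submodule.add_mem _ (Submodule.add_mem _ h1 h2) h3
    · rw [map_add, hact]
      abel

end Eval

section Lam

variable {n : ℕ}

variable (Q) in
/-- single adjacent swap -/
def Stp (l l' : List (Ltr Q)) : Prop :=
  ∃ (a b : List (Ltr Q)) (x y : Ltr Q),
    Γ.Adj x.1 y.1 ∧ l = a ++ x :: y :: b ∧ l' = a ++ y :: x :: b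

lemma Stp_perm {l l' : List (Ltr Q)} (h : Stp Γ Q l l') : l.Perm l' := by
  obtain ⟨a, b, x, y, _, rfl, rfl⟩ := h
  exact (List.perm_append_left_iff a).2 (List.Perm.swap y x b)

lemma Eqv_perm {l l' : List (Ltr Q)} (h : Relation.EqvGen (Stp Γ Q) l l') : l.Perm l' := by
  induction h with
  | rel _ _ h => exact Stp_perm Γ h
  | refl => exact List.Perm.refl _
  | symm _ _ _ ih => exact ih.symm
  | trans _ _ _ _ _ ih1 ih2 => exact ih1.trans ih2

variable (Q) in
open Classical in
noncomputable def lam (w : List (Ltr Q)) : M Q →ₗ[ZMod 2] ZMod 2 :=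
  Finsupp.linearCombination (ZMod 2)
    (fun l => if Relation.EqvGen (Stp Γ Q) l w then (1 : ZMod 2) else 0)

open Classical in
lemma lam_e (w l : List (Ltr Q)) :
    lam Γ Q w (e l) = if Relation.EqvGen (Stp Γ Q) l w then (1 : ZMod 2) else 0 := by
  rw [lam, e]
  rw [Finsupp.linearCombination_single, one_smul]

lemma Red_nontriv : ∀ {w : List (Ltr Q)}, Red Γ w → ∀ x ∈ w, x.2 ≠ 1
  | [], _, x, hx => absurd hx List.not_mem_nil
  | y :: t, hred, x, hx => by
    rcases List.mem_cons.1 hx with rfl | hxt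
    · exact hred.1
    · exact Red_nontriv hred.2.2 x hxt

lemma lam_K {w : List (Ltr Q)} (hnt : ∀ x ∈ w, x.2 ≠ 1) (hwn : w.length ≤ n) :
    K Γ Q n ≤ LinearMap.ker (lam Γ Q w) := by
  rw [K]
  refine Submodule.span_le.2 ?_
  rintro m (⟨a, b, x, y, hadj, rfl⟩ | ⟨l, x, hx, h1, rfl⟩ | ⟨l, hl, rfl⟩) <;>
    simp only [SetLike.mem_coe, LinearMap.mem_ker]
  · rw [map_add, lam_e, lam_e]
    have hiff : Relation.EqvGen (Stp Γ Q) (a ++ x :: y :: b) w ↔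
        Relation.EqvGen (Stp Γ Q) (a ++ y :: x :: b) w := by
      constructor
      · intro h
        exact Relation.EqvGen.trans _ _ _
          (Relation.EqvGen.symm _ _ (Relation.EqvGen.rel _ _ ⟨a, b, x, y, hadj, rfl, rfl⟩)) h
      · intro h
        exact Relation.EqvGen.trans _ _ _
          (Relation.EqvGen.rel _ _ ⟨a, b, x, y, hadj, rfl, rfl⟩) h
    by_cases h : Relation.EqvGen (Stp Γ Q) (a ++ x :: y :: b) w
    · rw [if_pos h, if_pos (hiff.1 h)]
      exact msum 1
    · rw [if_neg h, if_neg (fun hh => h (hiff.2 hh)), add_zero]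
  · rw [lam_e, if_neg]
    intro h
    exact hnt x ((Eqv_perm Γ h).mem_iff.1 hx) h1
  · rw [lam_e, if_neg]
    intro h
    have := (Eqv_perm Γ h).length_eq
    omega

variable (Q) in
open Classical in
noncomputable def lamQ (w : List (Ltr Q)) (hnt : ∀ x ∈ w, x.2 ≠ 1) (hwn : w.length ≤ n) :
    Nn Γ Q n →ₗ[ZMod 2] ZMod 2 :=
  Submodule.liftQ _ (lam Γ Q w) (lam_K Γ hnt hwn)

open Classical in
lemma lamQ_ebar (w : List (Ltr Q)) (hnt : ∀ x ∈ w, x.2 ≠ 1) (hwn : w.length ≤ n)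
    (l : List (Ltr Q)) :
    lamQ Γ Q w hnt hwn (ebar Γ Q n l) =
      if Relation.EqvGen (Stp Γ Q) l w then (1 : ZMod 2) else 0 := by
  rw [lamQ, show ebar Γ Q n l = Submodule.Quotient.mk (e l) from rfl,
    Submodule.liftQ_apply, lam_e]

end Lam

theorem separation {w : List (Ltr Q)} (hred : Red Γ w) (hne : w ≠ []) :
    Phi Γ Q w.length (gp Γ Q w) ≠ 1 := by
  set n := w.length with hn
  have hnt : ∀ x ∈ w, x.2 ≠ 1 := Red_nontriv Γ hred
  have hwn : w.length ≤ n := le_refl _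
  set lq := lamQ Γ Q w hnt hwn with hlq
  obtain ⟨j, hj, hval⟩ := eval Γ w hred hwn
  intro hone
  rw [Phi_gp] at hone
  have happly := congrArg (fun (uu : (Module.End (ZMod 2) (Nn Γ Q n))ˣ) =>
    ((uu : Module.End (ZMod 2) (Nn Γ Q n)) (ebar Γ Q n []))) hone
  rw [hval, Units.val_one] at happly
  rw [Module.End.one_apply] at happly
  have h0 : lq (ebar Γ Q n w + j) = 1 := by
    rw [map_add]
    have h1 : lq (ebar Γ Q n w) = 1 := by
      rw [hlq, lamQ_ebar, if_pos (Relation.EqvGen.refl w)]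
    have h2 : lq j = 0 := by
      clear hval hone happly
      induction hj using Submodule.span_induction with
      | mem x hx =>
        obtain ⟨t, ht, rfl⟩ := hx
        show lq (ebar Γ Q n t) = 0
        rw [hlq, lamQ_ebar, if_neg]
        intro h
        have := (Eqv_perm Γ h).length_eq
        simp only [Set.mem_setOf_eq] at ht
        omega
      | zero => simp
      | add x y _ _ hx hy => rw [map_add, hx, hy, add_zero]
      | smul c x _ hx => rw [map_smul, hx, smul_zero]
    rw [h1, h2, add_zero]
  have h3 : lq (ebar Γ Q n []) = 0 := by
    rw [hlq, lamQ_ebar, if_neg]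
    intro h
    have := (Eqv_perm Γ h).length_eq
    have : w.length ≠ 0 := fun hh => hne (List.length_eq_zero_iff.1 hh)
    simp_all
  rw [happly, h3] at h0
  exact one_ne_zero h0.symm


section Finiteness

variable {n : ℕ}

lemma finite_lists {α : Type u} {T : Set α} (hT : T.Finite) :
    ∀ n : ℕ, {l : List α | l.length ≤ n ∧ ∀ x ∈ l, x ∈ T}.Finite
  | 0 => by
    refine Set.Finite.subset (Set.finite_singleton []) ?_
    rintro l ⟨hl, -⟩
    simp [List.length_eq_zero_iff.1 (Nat.le_zero.1 hl)]
  | (n + 1) => by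
    refine Set.Finite.subset
      ((Set.finite_singleton ([] : List α)).union
        (Set.Finite.biUnion hT (fun x _ =>
          (finite_lists hT n).image (fun t => x :: t)))) ?_
    rintro l ⟨hl, hmem⟩
    rcases l with - | ⟨x, t⟩
    · exact Or.inl rfl
    · refine Or.inr (Set.mem_biUnion (hmem x (List.mem_cons_self)) ?_)
      refine ⟨t, ⟨?_, fun y hy => hmem y (List.mem_cons_of_mem x hy)⟩, rfl⟩
      simpa using Nat.succ_le_succ_iff.1 hl

lemma ebar_zero_of_bad {l : List (Ltr Q)}
    (h : ¬ (l.length ≤ n ∧ ∀ x ∈ l, x.2 ≠ 1)) : ebar Γ Q n l = 0 := by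
  rw [ebar, Submodule.Quotient.mk_eq_zero]
  by_cases hlen : l.length ≤ n
  · have h2 : ¬ ∀ x ∈ l, x.2 ≠ 1 := fun hall => h ⟨hlen, hall⟩
    push_neg at h2
    obtain ⟨x, hx, hx1⟩ := h2
    exact KZ Γ hx hx1
  · exact KT Γ (by omega)

lemma Nn_finite (hT : {x : Ltr Q | x.2 ≠ 1}.Finite) : Finite (Nn Γ Q n) := by
  set good : Set (List (Ltr Q)) :=
    {l : List (Ltr Q) | l.length ≤ n ∧ ∀ x ∈ l, x ∈ {x : Ltr Q | x.2 ≠ 1}} with hgood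
  have hgoodfin : good.Finite := finite_lists hT n
  have hspan : Submodule.span (ZMod 2) ((fun t => ebar Γ Q n t) '' good) = ⊤ := by
    rw [Submodule.eq_top_iff']
    intro z
    obtain ⟨m, rfl⟩ := Submodule.Quotient.mk_surjective _ z
    have hm : m ∈ Submodule.span (ZMod 2) (e '' (Set.univ : Set (List (Ltr Q)))) :=
      mem_span_e m (fun _ _ => Set.mem_univ _)
    have := mk_span (n := n) Γ hm
    refine Submodule.span_le.2 ?_ this
    rintro y ⟨t, -, rfl⟩
    show ebar Γ Q n t ∈ (Submodule.span (ZMod 2) ((fun t => ebar Γ Q n t) '' good) : Set _)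
    by_cases hg : t ∈ good
    · exact Submodule.subset_span ⟨t, hg, rfl⟩
    · rw [ebar_zero_of_bad Γ (by simpa [hgood] using hg)]
      exact Submodule.zero_mem _
  have : Module.Finite (ZMod 2) (Nn Γ Q n) := by
    refine ⟨?_⟩
    rw [Submodule.fg_def]
    exact ⟨_, hgoodfin.image _, hspan⟩
  exact Module.finite_of_finite (ZMod 2)

lemma End_finite (hT : {x : Ltr Q | x.2 ≠ 1}.Finite) :
    Finite ((Module.End (ZMod 2) (Nn Γ Q n))ˣ) := by
  have h1 : Finite (Nn Γ Q n) := Nn_finite Γ hT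
  have h2 : Finite (Module.End (ZMod 2) (Nn Γ Q n)) :=
    Finite.of_injective (fun f => (f : Nn Γ Q n → Nn Γ Q n))
      (fun a b h => LinearMap.coe_injective h)
  infer_instance

end Finiteness


section Transport

variable {Q' : V → Type u} [∀ v, Group (Q' v)]

/-- transport along an equality of vertices -/
noncomputable def eqHom {G : V → Type u} [∀ v, Group (G v)] {u v : V} (h : u = v) :
    G u →* G v := by subst h; exact MonoidHom.id _

lemma eqHom_rfl {G : V → Type u} [∀ v, Group (G v)] {v : V} (g : G v) :
    eqHom rfl g = g := rfl

lemma vis_map (ff : ∀ v, Q v →* Q' v) {v : V} :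
    ∀ l : List (Ltr Q),
      vis Γ v (l.map (fun x => (⟨x.1, ff x.1 x.2⟩ : Ltr Q'))) ↔ vis Γ v l
  | [] => Iff.rfl
  | x :: t => by
    show (x.1 = v ∨ _) ↔ (x.1 = v ∨ _)
    rw [vis_map ff t]

lemma Red_map (ff : ∀ v, Q v →* Q' v) :
    ∀ l : List (Ltr Q), Red Γ l → (∀ x ∈ l, ff x.1 x.2 ≠ 1) →
      Red Γ (l.map (fun x => (⟨x.1, ff x.1 x.2⟩ : Ltr Q')))
  | [], _, _ => trivial
  | x :: t, hred, hnt => by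
    obtain ⟨h1, h2, h3⟩ := hred
    refine ⟨hnt x (List.mem_cons_self), ?_,
      Red_map ff t h3 (fun y hy => hnt y (List.mem_cons_of_mem x hy))⟩
    intro hv
    exact h2 ((vis_map Γ ff t).1 hv)

lemma lift_wrd (ff : ∀ v, Q v →* Q' v) :
    ∀ l : List (Ltr Q),
      (CoprodI.lift (fun v => (gpmk Γ Q').comp ((CoprodI.of).comp (ff v)))) (wrd Q l) =
        gp Γ Q' (l.map (fun x => (⟨x.1, ff x.1 x.2⟩ : Ltr Q')))
  | [] => by rw [wrd_nil, map_one, List.map_nil, gp_nil]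
  | x :: t => by
    rw [wrd_cons, map_mul, lift_wrd ff t, List.map_cons, gp_cons, CoprodI.lift_of]
    rfl

end Transport

end GPRF

open GPRF in
/-- Graph products of residually finite groups are residually finite. -/
theorem graphProduct_residuallyFinite
    {V : Type u} (Γ : SimpleGraph V) (G : V → Type u) [∀ v, Group (G v)]
    (hres : ∀ v, ResiduallyFinite (G v)) :
    ResiduallyFinite (GraphProduct Γ G) := by
  classical
  intro x hx
  obtain ⟨l, hred, rfl⟩ := gp_surj Γ x
  have hne : l ≠ [] := by
    rintro rfl
    rw [gp_nil] at hx
    exact hx rfl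
  -- choose finite separating quotients for every letter of the word
  have hchoice : ∀ x : {x : Ltr G // x ∈ l}, ∃ (Q : Type u) (_ : Group Q)
      (φ : G x.1.1 →* Q), Finite Q ∧ Function.Surjective φ ∧ φ x.1.2 ≠ 1 :=
    fun x => hres x.1.1 x.1.2 (Red_nontriv Γ hred _ x.2)
  choose QT iQT φT hfinT _ hneT using hchoice
  letI : ∀ x : {x : Ltr G // x ∈ l}, Group (QT x) := iQT
  haveI : Finite {x : Ltr G // x ∈ l} := (l.finite_toSet).to_subtype
  -- the quotient family
  set Qf : V → Type u := fun v => ∀ x : {x : {x : Ltr G // x ∈ l} // x.1.1 = v}, QT x.1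
    with hQf
  letI instQf : ∀ v, Group (Qf v) := fun v => Pi.group
  haveI hQfFin : ∀ v, Finite (Qf v) := fun v => by
    haveI : ∀ x : {x : {x : Ltr G // x ∈ l} // x.1.1 = v}, Finite (QT x.1) :=
      fun x => hfinT x.1
    exact Pi.finite
  -- the vertex-wise quotient maps
  set φf : ∀ v, G v →* Qf v := fun v =>
    { toFun := fun g x => φT x.1 (eqHom x.2.symm g)
      map_one' := by funext x; simp only [map_one]; rfl
      map_mul' := fun a b => by funext x; simp only [map_mul]; rfl } with hφf
  have hφne : ∀ x ∈ l, φf x.1 x.2 ≠ 1 := by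
    intro x hxl h1
    have := congrFun h1 (⟨⟨x, hxl⟩, rfl⟩ : {y : {y : Ltr G // y ∈ l} // y.1.1 = x.1})
    rw [hφf] at this
    simp only [MonoidHom.coe_mk, OneHom.coe_mk, Pi.one_apply] at this
    rw [eqHom_rfl] at this
    exact hneT ⟨x, hxl⟩ this
  -- finiteness of the set of nontrivial letters of the quotient family
  have hT : {y : Ltr Qf | y.2 ≠ 1}.Finite := by
    have hsub : {y : Ltr Qf | y.2 ≠ 1} ⊆
        ⋃ v ∈ ((l.map (·.1)).toFinset : Set V),
          Set.range (Sigma.mk v : Qf v → Ltr Qf) := by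
      rintro ⟨yv, yq⟩ hy
      by_cases hv : yv ∈ ((l.map (·.1)).toFinset : Set V)
      · exact Set.mem_biUnion hv ⟨yq, rfl⟩
      · exfalso
        haveI : IsEmpty {x : {x : Ltr G // x ∈ l} // x.1.1 = yv} := by
          refine ⟨fun x => hv ?_⟩
          simp only [Set.mem_setOf_eq, Finset.coe_sort_coe, List.coe_toFinset,
            Set.mem_setOf_eq, List.mem_map]
          exact ⟨x.1.1, x.1.2, x.2⟩
        have : yq = 1 := Subsingleton.elim _ _
        exact hy this
    refine Set.Finite.subset (Set.Finite.biUnion (Finset.finite_toSet _)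
      (fun v _ => Set.finite_range _)) hsub
  -- the induced map of graph products
  set tau : CoprodI G →* GraphProduct Γ Qf :=
    CoprodI.lift (fun v => (gpmk Γ Qf).comp ((CoprodI.of).comp (φf v))) with htau
  have hker : Subgroup.normalClosure
      { y : CoprodI G | ∃ (u v : V) (gu : G u) (gv : G v),
        Γ.Adj u v ∧ y = ⁅CoprodI.of gu, CoprodI.of gv⁆ } ≤ tau.ker := by
    refine Subgroup.normalClosure_le_normal ?_
    rintro y ⟨u, v, gu, gv, hadj, rfl⟩
    rw [SetLike.mem_coe, MonoidHom.mem_ker, map_commutatorElement,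
      htau, CoprodI.lift_of, CoprodI.lift_of, commutatorElement_eq_one_iff_commute]
    exact gpmk_commute Γ hadj (φf u gu) (φf v gv)
  set Psi : GraphProduct Γ G →* GraphProduct Γ Qf :=
    QuotientGroup.lift _ tau hker with hPsi
  -- the mapped word
  set w : List (Ltr Qf) := l.map (fun x => (⟨x.1, φf x.1 x.2⟩ : Ltr Qf)) with hw
  have hwred : Red Γ w := Red_map Γ φf l hred hφne
  have hwne : w ≠ [] := by
    rw [hw]
    simpa using hne
  have hPsigp : Psi (gp Γ G l) = gp Γ Qf w := by
    have h1 : Psi (gp Γ G l) = tau (wrd G l) := QuotientGroup.lift_mk' _ hker _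
    rw [h1, htau, lift_wrd Γ φf l, hw]
  -- the separating finite quotient
  haveI hfinU : Finite ((Module.End (ZMod 2) (Nn Γ Qf w.length))ˣ) := End_finite Γ hT
  set comp : GraphProduct Γ G →* (Module.End (ZMod 2) (Nn Γ Qf w.length))ˣ :=
    (Phi Γ Qf w.length).comp Psi with hcomp
  have hcompne : comp (gp Γ G l) ≠ 1 := by
    rw [hcomp, MonoidHom.comp_apply, hPsigp]
    exact separation Γ hwred hwne
  refine ⟨comp.range, inferInstance, comp.rangeRestrict, ?_, ?_, ?_⟩
  · exact Subtype.finite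
  · exact comp.rangeRestrict_surjective
  · intro h1
    refine hcompne ?_
    have := congrArg Subtype.val h1
    simpa using this
end
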